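/- arXiv:2012.10370 — 6 statements merged into one kernel-verified Lean document; each statement's English description precedes it below -/
import Mathlib

section
/- Let X be a square-integrable random vector in ℝ^d with law μ and let X̂ = Proj_Γ(X) be its nearest-neighbour projection onto a quadratic optimal N-quantizer Γ of μ. Then E[X | X̂] = X̂; in particular the law μ̂ of X̂ is smaller than μ in the convex order. -/
open MeasureTheory Set

noncomputable section

abbrev Ed (d : ℕ) := EuclideanSpace ℝ (Fin d)

lemma my_integrable_id {d : ℕ} {μ : Measure (Ed d)} [IsProbabilityMeasure μ]
    (hμ2 : Integrable (fun x => ‖x‖ ^ (2 : ℝ)) μ) : Integrable (fun x : Ed d => x) μ := by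
  refine (hμ2.add (integrable_const 1)).mono' measurable_id.aestronglyMeasurable ?_
  filter_upwards with x
  have h2 : ‖x‖ ^ (2:ℝ) = ‖x‖ ^ 2 := by
    rw [show ((2:ℝ)) = ((2:ℕ):ℝ) by norm_num, Real.rpow_natCast]
  show ‖x‖ ≤ ‖x‖ ^ (2:ℝ) + 1
  rw [h2]
  nlinarith [sq_nonneg (‖x‖ - 1), norm_nonneg x]

lemma my_integrable_sq_dist {d : ℕ} {μ : Measure (Ed d)} [IsProbabilityMeasure μ]
    (hμ2 : Integrable (fun x => ‖x‖ ^ (2 : ℝ)) μ)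
    {g : Ed d → Ed d} (hg : Measurable g) (B : ℝ) (hB : ∀ x, ‖g x‖ ≤ B) :
    Integrable (fun x => ‖x - g x‖ ^ 2) μ := by
  have hsq : Integrable (fun x : Ed d => ‖x‖ ^ 2) μ := by
    have h : (fun x : Ed d => ‖x‖ ^ (2:ℝ)) = fun x => ‖x‖ ^ 2 := by
      funext x; rw [show ((2:ℝ)) = ((2:ℕ):ℝ) by norm_num, Real.rpow_natCast]
    rwa [h] at hμ2
  refine ((hsq.const_mul 2).add (integrable_const (2 * B ^ 2))).mono'
    ((measurable_id.sub hg).norm.pow_const 2).aestronglyMeasurable ?_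
  filter_upwards with x
  have h1 : ‖x - g x‖ ≤ ‖x‖ + B := (norm_sub_le _ _).trans (by linarith [hB x])
  have h0 : (0:ℝ) ≤ ‖x - g x‖ := norm_nonneg _
  rw [Real.norm_eq_abs, abs_of_nonneg (by positivity)]
  show ‖x - g x‖ ^ 2 ≤ 2 * ‖x‖ ^ 2 + 2 * B ^ 2
  nlinarith [sq_nonneg (‖x‖ - B), norm_nonneg x, (norm_nonneg (g x)).trans (hB x)]

variable {E : Type*} [NormedAddCommGroup E] [NormedSpace ℝ E] [MeasurableSpace E] [BorelSpace E]

/-- A coupling between `μ` and `ν`. -/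
def IsCoupling (π : Measure (E × E)) (μ ν : Measure E) : Prop :=
  π.map Prod.fst = μ ∧ π.map Prod.snd = ν

/-- A martingale coupling between `μ` and `ν` : a probability coupling such that the
conditional expectation of the second coordinate given the first is the first. -/
def IsMartingaleCoupling (π : Measure (E × E)) (μ ν : Measure E) : Prop :=
  IsProbabilityMeasure π ∧ IsCoupling π μ ν ∧
    ∀ A : Set E, MeasurableSet A →
      ∫ q in A ×ˢ (univ : Set E), (q.2 - q.1) ∂π = 0

/-- The convex order `μ ≤_cvx ν`. -/
def ConvexOrder (μ ν : Measure E) : Prop :=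
  ∀ φ : E → ℝ, ConvexOn ℝ univ φ → Integrable φ μ → Integrable φ ν →
    ∫ x, φ x ∂μ ≤ ∫ x, φ x ∂ν

/-- The `p`-th power transport cost of a coupling. -/
def pCost (p : ℝ) (π : Measure (E × E)) : ℝ := ∫ q, ‖q.2 - q.1‖ ^ p ∂π

/-- `W_p(μ,ν)^p`. -/
def WpPow (p : ℝ) (μ ν : Measure E) : ℝ :=
  sInf {c | ∃ π : Measure (E × E), IsProbabilityMeasure π ∧ IsCoupling π μ ν ∧ c = pCost p π}

/-- The Wasserstein distance `W_p(μ,ν)`. -/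
def Wp (p : ℝ) (μ ν : Measure E) : ℝ := WpPow p μ ν ^ (1 / p)

/-- `M_p(μ,ν)^p` : the martingale transport cost. -/
def MpPow (p : ℝ) (μ ν : Measure E) : ℝ :=
  sInf {c | ∃ π : Measure (E × E), IsMartingaleCoupling π μ ν ∧ c = pCost p π}

/-- `M_p(μ,ν)`. -/
def Mp (p : ℝ) (μ ν : Measure E) : ℝ := MpPow p μ ν ^ (1 / p)

/-- A Borel nearest-neighbour projection onto the finite set `Γ`. -/
def IsNearestProj (Γ : Finset E) (f : E → E) : Prop :=
  Measurable f ∧ ∀ x, f x ∈ Γ ∧ ‖x - f x‖ = Metric.infDist x (Γ : Set E)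

/-- `e_p(Γ,μ)^p`, the `p`-th power quantization error on the grid `Γ`. -/
def quantErrPow (p : ℝ) (Γ : Finset E) (μ : Measure E) : ℝ :=
  ∫ x, Metric.infDist x (Γ : Set E) ^ p ∂μ

/-- `Γ` is an `L^p`-optimal `N`-quantizer of `μ`. -/
def IsOptimalQuantizer (p : ℝ) (N : ℕ) (Γ : Finset E) (μ : Measure E) : Prop :=
  Γ.Nonempty ∧ Γ.card ≤ N ∧
    ∀ Γ' : Finset E, Γ'.Nonempty → Γ'.card ≤ N → quantErrPow p Γ μ ≤ quantErrPow p Γ' μ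

/-- `ν` is supported on at most `N` points. -/
def SuppLE (N : ℕ) (ν : Measure E) : Prop :=
  ∃ s : Finset E, s.card ≤ N ∧ ν ((s : Set E)ᶜ) = 0


lemma my_centroid {d N : ℕ} {μ : Measure (Ed d)} [IsProbabilityMeasure μ]
    (hμ2 : Integrable (fun x => ‖x‖ ^ (2 : ℝ)) μ)
    {Γ : Finset (Ed d)} (hΓ : IsOptimalQuantizer 2 N Γ μ)
    {f : Ed d → Ed d} (hf : IsNearestProj Γ f) {a : Ed d} (ha : a ∈ Γ) :
    ∫ x in f ⁻¹' {a}, (x - a) ∂μ = 0 := by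
  classical
  by_contra hS
  set C : Set (Ed d) := f ⁻¹' {a} with hCdef
  set S : Ed d := ∫ x in C, (x - a) ∂μ with hSdef
  have hC : MeasurableSet C := hf.1 (measurableSet_singleton a)
  obtain ⟨hΓne, hcard, hopt⟩ := hΓ
  set B : ℝ := Γ.sup' hΓne (fun c => ‖c‖) with hBdef
  have hfB : ∀ x, ‖f x‖ ≤ B := fun x => Finset.le_sup' (fun c => ‖c‖) (hf.2 x).1
  set b : Ed d := a + S with hbdef
  set f' : Ed d → Ed d := fun x => if f x = a then b else f x with hf'def
  have hf'm : Measurable f' :=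
    Measurable.ite (hf.1 (measurableSet_singleton a)) measurable_const hf.1
  set Γ' : Finset (Ed d) := insert b (Γ.erase a) with hΓ'def
  have hf'Γ : ∀ x, f' x ∈ Γ' := by
    intro x
    by_cases h : f x = a
    · simp [hf'def, h, hΓ'def]
    · simp only [hf'def, h, if_false, hΓ'def]
      exact Finset.mem_insert_of_mem (Finset.mem_erase.2 ⟨h, (hf.2 x).1⟩)
  have hf'B : ∀ x, ‖f' x‖ ≤ max B ‖b‖ := by
    intro x
    by_cases h : f x = a
    · simp [hf'def, h]
    · simp only [hf'def, h, if_false]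
      exact le_max_of_le_left (hfB x)
  have hIf : Integrable (fun x => ‖x - f x‖ ^ 2) μ := my_integrable_sq_dist hμ2 hf.1 B hfB
  have hIf' : Integrable (fun x => ‖x - f' x‖ ^ 2) μ := my_integrable_sq_dist hμ2 hf'm _ hf'B
  have hrpow : ∀ r : ℝ, r ^ (2:ℝ) = r ^ 2 := fun r => by
    rw [show ((2:ℝ)) = ((2:ℕ):ℝ) by norm_num, Real.rpow_natCast]
  have hqΓ : quantErrPow 2 Γ μ = ∫ x, ‖x - f x‖ ^ 2 ∂μ := by
    unfold quantErrPow
    refine integral_congr_ae (Filter.Eventually.of_forall fun x => ?_)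
    show Metric.infDist x (Γ : Set (Ed d)) ^ (2:ℝ) = ‖x - f x‖ ^ 2
    rw [hrpow, ← (hf.2 x).2]
  have hqΓ' : quantErrPow 2 Γ' μ ≤ ∫ x, ‖x - f' x‖ ^ 2 ∂μ := by
    unfold quantErrPow
    refine integral_mono_of_nonneg (Filter.Eventually.of_forall fun x => ?_) hIf'
      (Filter.Eventually.of_forall fun x => ?_)
    · show (0:ℝ) ≤ Metric.infDist x (Γ' : Set (Ed d)) ^ (2:ℝ)
      exact Real.rpow_nonneg Metric.infDist_nonneg 2
    · show Metric.infDist x (Γ' : Set (Ed d)) ^ (2:ℝ) ≤ ‖x - f' x‖ ^ 2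
      rw [hrpow]
      have h1 : Metric.infDist x (Γ' : Set (Ed d)) ≤ ‖x - f' x‖ := by
        rw [show ‖x - f' x‖ = dist x (f' x) from (dist_eq_norm x (f' x)).symm]
        exact Metric.infDist_le_dist_of_mem (Finset.mem_coe.2 (hf'Γ x))
      exact pow_le_pow_left₀ Metric.infDist_nonneg h1 2
  have hcard' : Γ'.card ≤ N := by
    calc Γ'.card ≤ (Γ.erase a).card + 1 := Finset.card_insert_le _ _
      _ = Γ.card := Finset.card_erase_add_one ha
      _ ≤ N := hcard
  have hle := hopt Γ' ⟨b, Finset.mem_insert_self _ _⟩ hcard'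
  -- integrability pieces
  have hid : Integrable (fun x : Ed d => x) μ := my_integrable_id hμ2
  have hIa : Integrable (fun x => ‖x - a‖ ^ 2) μ :=
    my_integrable_sq_dist hμ2 measurable_const ‖a‖ (fun _ => le_refl _)
  have hsub : Integrable (fun x : Ed d => x - a) μ := hid.sub (integrable_const a)
  have hinner : Integrable (fun x : Ed d => (inner ℝ S (x - a) : ℝ)) (μ.restrict C) :=
    (innerSL ℝ S).integrable_comp hsub.restrict
  -- split integrals along C
  have hsplitf : ∫ x, ‖x - f x‖^2 ∂μ
      = ∫ x in C, ‖x - a‖^2 ∂μ + ∫ x in Cᶜ, ‖x - f x‖^2 ∂μ := by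
    rw [← integral_add_compl hC hIf]
    congr 1
    refine setIntegral_congr_fun hC fun x hx => ?_
    have hxa : f x = a := hx
    rw [hxa]
  have hsplitf' : ∫ x, ‖x - f' x‖^2 ∂μ
      = ∫ x in C, ‖x - b‖^2 ∂μ + ∫ x in Cᶜ, ‖x - f x‖^2 ∂μ := by
    rw [← integral_add_compl hC hIf']
    congr 1
    · refine setIntegral_congr_fun hC fun x hx => ?_
      have hxa : f x = a := hx
      simp only [hf'def, hxa, if_true]
    · refine setIntegral_congr_fun hC.compl fun x hx => ?_
      have hxa : f x ≠ a := hx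
      simp only [hf'def, hxa, if_false]
  -- key identity on C
  have e1 : ∀ x : Ed d, ‖x - b‖^2 = ‖x - a‖^2 - 2 * (inner ℝ S (x - a) : ℝ) + ‖S‖^2 := by
    intro x
    have hxb : x - b = (x - a) - S := by rw [hbdef]; abel
    rw [hxb, norm_sub_sq_real, real_inner_comm]
  have hIsum : ∫ x in C, (inner ℝ S (x - a) : ℝ) ∂μ = ‖S‖^2 := by
    have h := (innerSL ℝ S).integral_comp_comm (hsub.restrict (s := C))
    simp only [innerSL_apply_apply] at h
    rw [h, ← hSdef, real_inner_self_eq_norm_sq]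
  have hkey : ∫ x in C, ‖x - b‖^2 ∂μ
      = ∫ x in C, ‖x - a‖^2 ∂μ + ((μ C).toReal - 2) * ‖S‖^2 := by
    have hcongr : ∫ x in C, ‖x - b‖^2 ∂μ
        = ∫ x in C, (‖x - a‖^2 - 2 * (inner ℝ S (x - a) : ℝ) + ‖S‖^2) ∂μ :=
      integral_congr_ae (Filter.Eventually.of_forall fun x => e1 x)
    have h2 : Integrable (fun x : Ed d => 2 * (inner ℝ S (x - a) : ℝ)) (μ.restrict C) :=
      hinner.const_mul 2
    have h1 : Integrable (fun x : Ed d => ‖x - a‖^2 - 2 * (inner ℝ S (x - a) : ℝ))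
        (μ.restrict C) := hIa.restrict.sub h2
    rw [hcongr, integral_add h1 (integrable_const _), integral_sub hIa.restrict h2,
      integral_const_mul, hIsum, setIntegral_const, smul_eq_mul, measureReal_def]
    ring
  -- conclude
  have hμC1 : (μ C).toReal ≤ 1 := by
    have h1 : μ C ≤ 1 := prob_le_one
    have := ENNReal.toReal_mono ENNReal.one_ne_top h1
    simpa using this
  have hSpos : 0 < ‖S‖^2 := pow_pos (norm_pos_iff.2 hS) 2
  have hlt : ((μ C).toReal - 2) * ‖S‖^2 < 0 :=
    mul_neg_of_neg_of_pos (by linarith) hSpos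
  rw [hqΓ, hsplitf] at hle
  have hfinal : quantErrPow 2 Γ' μ ≤ ∫ x in C, ‖x - a‖^2 ∂μ + ∫ x in Cᶜ, ‖x - f x‖^2 ∂μ
      + ((μ C).toReal - 2) * ‖S‖^2 := by
    rw [hsplitf', hkey] at hqΓ'
    linarith
  linarith

lemma my_cell_jensen {d : ℕ} {μ : Measure (Ed d)} [IsProbabilityMeasure μ]
    (hid : Integrable (fun x : Ed d => x) μ)
    {C : Set (Ed d)} (hC : MeasurableSet C) {a : Ed d}
    (hcen : ∫ x in C, (x - a) ∂μ = 0)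
    {φ : Ed d → ℝ} (hφ : ConvexOn ℝ univ φ) (hφc : ContinuousOn φ univ)
    (hφi : Integrable φ μ) :
    (μ C).toReal * φ a ≤ ∫ x in C, φ x ∂μ := by
  rcases eq_or_ne (μ C) 0 with h0 | h0
  · rw [Measure.restrict_eq_zero.2 h0]
    simp [h0]
  · have hfin : μ C ≠ ⊤ := measure_ne_top μ C
    have ht0 : (μ C).toReal ≠ 0 := ENNReal.toReal_ne_zero.2 ⟨h0, hfin⟩
    have htpos : 0 < (μ C).toReal := lt_of_le_of_ne ENNReal.toReal_nonneg (Ne.symm ht0)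
    haveI : NeZero (μ.restrict C) := ⟨by
      rw [← Measure.measure_univ_ne_zero, Measure.restrict_apply_univ]
      exact h0⟩
    have hia : Integrable (fun x : Ed d => x) (μ.restrict C) := hid.restrict
    have hsum : ∫ x in C, x ∂μ = (μ C).toReal • a := by
      have hd : ∫ x in C, (x - a) ∂μ
          = (∫ x in C, x ∂μ) - ∫ x in C, (fun _ => a) x ∂μ := integral_sub hia (integrable_const a)
      rw [hcen, setIntegral_const] at hd
      exact sub_eq_zero.1 hd.symm
    have havg : ⨍ x, x ∂(μ.restrict C) = a := by
      rw [average_eq, measureReal_restrict_apply_univ, measureReal_def, hsum, smul_smul,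
        inv_mul_cancel₀ ht0, one_smul]
    have hj := hφ.map_average_le hφc isClosed_univ
      (Filter.Eventually.of_forall fun x => mem_univ x) hia hφi.restrict
    rw [havg, average_eq, measureReal_restrict_apply_univ, measureReal_def] at hj
    have h2 := mul_le_mul_of_nonneg_left hj htpos.le
    rwa [smul_eq_mul, ← mul_assoc, mul_inv_cancel₀ ht0, one_mul] at h2

theorem stmt2 (d N : ℕ) (μ : Measure (Ed d)) [IsProbabilityMeasure μ]
    (hμ2 : Integrable (fun x => ‖x‖ ^ (2 : ℝ)) μ)
    (Γ : Finset (Ed d)) (hΓ : IsOptimalQuantizer 2 N Γ μ)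
    (f : Ed d → Ed d) (hf : IsNearestProj Γ f) :
    IsMartingaleCoupling (μ.map (fun x => (f x, x))) (μ.map f) μ ∧
      ConvexOrder (μ.map f) μ := by
  classical
  have hfm : Measurable f := hf.1
  have hg : Measurable (fun x : Ed d => (f x, x)) := hfm.prodMk measurable_id
  have hΓne : Γ.Nonempty := hΓ.1
  set B : ℝ := Γ.sup' hΓne (fun c => ‖c‖) with hBdef
  have hfB : ∀ x, ‖f x‖ ≤ B := fun x => Finset.le_sup' (fun c => ‖c‖) (hf.2 x).1
  have hfint : Integrable f μ :=
    (integrable_const B).mono' hfm.aestronglyMeasurable (Filter.Eventually.of_forall hfB)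
  have hid : Integrable (fun x : Ed d => x) μ := my_integrable_id hμ2
  have hintsub : Integrable (fun x : Ed d => x - f x) μ := hid.sub hfint
  have hcen : ∀ c ∈ Γ, ∫ x in f ⁻¹' {c}, (x - c) ∂μ = 0 :=
    fun c hc => my_centroid hμ2 hΓ hf hc
  have hmeasC : ∀ c : Ed d, MeasurableSet (f ⁻¹' {c}) :=
    fun c => hfm (measurableSet_singleton c)
  have hdisj : ∀ c c' : Ed d, c ≠ c' → Disjoint (f ⁻¹' {c}) (f ⁻¹' {c'}) := by
    intro c c' hne
    refine Set.disjoint_left.2 fun x hx hx' => hne ?_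
    have h1 : f x = c := hx
    have h2 : f x = c' := hx'
    rw [← h1, h2]
  constructor
  · refine ⟨Measure.isProbabilityMeasure_map hg.aemeasurable, ⟨?_, ?_⟩, ?_⟩
    · rw [Measure.map_map measurable_fst hg]
      rfl
    · rw [Measure.map_map measurable_snd hg]
      exact Measure.map_id
    · intro A hA
      have hsm : AEStronglyMeasurable (fun q : Ed d × Ed d => q.2 - q.1)
          ((μ.map (fun x => (f x, x)))) :=
        (measurable_snd.sub measurable_fst).aestronglyMeasurable
      rw [setIntegral_map (hA.prod MeasurableSet.univ) hsm hg.aemeasurable]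
      have hpre : (fun x : Ed d => (f x, x)) ⁻¹' (A ×ˢ univ) = f ⁻¹' A := by
        ext x; simp
      rw [hpre]
      show ∫ x in f ⁻¹' A, (x - f x) ∂μ = 0
      set T : Finset (Ed d) := Γ.filter (fun c => c ∈ A) with hT
      have hU : f ⁻¹' A = ⋃ c ∈ T, f ⁻¹' {c} := by
        ext x
        simp only [mem_preimage, mem_iUnion, mem_singleton_iff, Finset.mem_filter, hT,
          exists_prop]
        constructor
        · intro hx; exact ⟨f x, ⟨(hf.2 x).1, hx⟩, rfl⟩
        · rintro ⟨c, ⟨_, hcA⟩, hc⟩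
          rw [hc]; exact hcA
      rw [hU, integral_biUnion_finset T (fun c _ => hmeasC c)
        (fun c _ c' _ hne => hdisj c c' hne)
        (fun c _ => hintsub.integrableOn)]
      refine Finset.sum_eq_zero fun c hc => ?_
      have hcΓ : c ∈ Γ := (Finset.mem_filter.1 hc).1
      have : ∫ x in f ⁻¹' {c}, (x - f x) ∂μ = ∫ x in f ⁻¹' {c}, (x - c) ∂μ := by
        refine setIntegral_congr_fun (hmeasC c) fun x hx => ?_
        have hxc : f x = c := hx
        rw [hxc]
      rw [this]
      exact hcen c hcΓ
  · intro φ hconv hφmap hφμ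
    have hφc : ContinuousOn φ univ := hconv.continuousOn isOpen_univ
    have hφfm : Integrable (fun x => φ (f x)) μ :=
      (integrable_map_measure hφmap.1 hfm.aemeasurable).1 hφmap
    rw [integral_map hfm.aemeasurable hφmap.1]
    have hUuniv : (univ : Set (Ed d)) = ⋃ c ∈ Γ, f ⁻¹' {c} := by
      ext x
      simp only [mem_univ, true_iff, mem_iUnion, mem_preimage, mem_singleton_iff, exists_prop]
      exact ⟨f x, (hf.2 x).1, rfl⟩
    have hbi : ∀ (h : Ed d → ℝ), Integrable h μ →
        ∫ x, h x ∂μ = ∑ c ∈ Γ, ∫ x in f ⁻¹' {c}, h x ∂μ := by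
      intro h hh
      rw [← setIntegral_univ (μ := μ) (f := h), hUuniv,
        integral_biUnion_finset Γ (fun c _ => hmeasC c)
          (fun c _ c' _ hne => hdisj c c' hne) (fun c _ => hh.integrableOn)]
    rw [hbi _ hφfm, hbi _ hφμ]
    refine Finset.sum_le_sum fun c hc => ?_
    have h1 : ∫ x in f ⁻¹' {c}, φ (f x) ∂μ = (μ (f ⁻¹' {c})).toReal * φ c := by
      have : ∫ x in f ⁻¹' {c}, φ (f x) ∂μ = ∫ x in f ⁻¹' {c}, (fun _ => φ c) x ∂μ := by
        refine setIntegral_congr_fun (hmeasC c) fun x hx => ?_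
        have hxc : f x = c := hx
        rw [hxc]
      rw [this, setIntegral_const, smul_eq_mul, measureReal_def]
    rw [h1]
    exact my_cell_jensen hid (hmeasC c) (hcen c hc) hconv hφc hφμ
end
end

section
/- Let Γ be a quadratic optimal N-quantizer of μ ∈ P₂(ℝ^d) with associated quantization μ̂ = μ ∘ Proj_Γ^{-1}. Then for every probability measure ν with μ̂ ≤_cvx ν ≤_cvx μ, Γ is also a quadratic optimal N-quantizer of ν, and the quantization of ν on Γ coincides with μ̂. -/
open MeasureTheory Set

noncomputable section

variable {E : Type*} [NormedAddCommGroup E] [NormedSpace ℝ E] [MeasurableSpace E] [BorelSpace E]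

namespace Stmt7Aux
variable {d : ℕ}
local instance : DecidableEq (Ed d) := Classical.decEq _

/-- affine minorant of the convex part of the quantization error -/
def La (a x : Ed d) : ℝ := 2 * (inner ℝ a x : ℝ) - ‖a‖ ^ 2

/-- convex part of the quadratic quantization error -/
def qpsi (G : Finset (Ed d)) (x : Ed d) : ℝ :=
  ‖x‖ ^ 2 - Metric.infDist x (G : Set (Ed d)) ^ 2

lemma La_eq (a x : Ed d) : La a x = ‖x‖ ^ 2 - ‖x - a‖ ^ 2 := by
  have := norm_sub_sq_real x a
  simp only [La]
  rw [real_inner_comm]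
  linarith

lemma exists_attain (G : Finset (Ed d)) (hG : G.Nonempty) (x : Ed d) :
    ∃ c ∈ G, Metric.infDist x (G : Set (Ed d)) = ‖x - c‖ := by
  obtain ⟨c, hc, h⟩ := (G.finite_toSet.isCompact).exists_infDist_eq_dist
    (by exact_mod_cast hG) x
  exact ⟨c, hc, by rw [h, dist_eq_norm]⟩

lemma La_le_qpsi (G : Finset (Ed d)) (hG : G.Nonempty) {b : Ed d} (hb : b ∈ G) (x : Ed d) :
    La b x ≤ qpsi G x := by
  rw [La_eq, qpsi]
  have h1 : Metric.infDist x (G : Set (Ed d)) ≤ ‖x - b‖ := by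
    simpa [dist_eq_norm] using Metric.infDist_le_dist_of_mem (show b ∈ (G : Set (Ed d)) from hb)
  have h0 : 0 ≤ Metric.infDist x (G : Set (Ed d)) := Metric.infDist_nonneg
  nlinarith

lemma qpsi_eq_attain (G : Finset (Ed d)) (hG : G.Nonempty) (x : Ed d) :
    ∃ c ∈ G, qpsi G x = La c x := by
  obtain ⟨c, hc, h⟩ := exists_attain G hG x
  exact ⟨c, hc, by rw [qpsi, La_eq, h]⟩

lemma qpsi_convex (G : Finset (Ed d)) (hG : G.Nonempty) : ConvexOn ℝ univ (qpsi G) := by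
  refine ⟨convex_univ, fun x _ y _ p q hp hq hpq => ?_⟩
  obtain ⟨c, hc, hce⟩ := qpsi_eq_attain G hG (p • x + q • y)
  rw [hce]
  have hx := La_le_qpsi G hG hc x
  have hy := La_le_qpsi G hG hc y
  have hlin : La c (p • x + q • y) = p * La c x + q * La c y := by
    simp only [La, inner_add_right, inner_smul_right]
    ring_nf
    nlinarith [hpq]
  rw [hlin]
  have := mul_le_mul_of_nonneg_left hx hp
  have := mul_le_mul_of_nonneg_left hy hq
  simp only [smul_eq_mul]; linarith

lemma qpsi_continuous (G : Finset (Ed d)) : Continuous (qpsi G) := by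
  apply Continuous.sub
  · exact (continuous_norm).pow 2
  · exact (Metric.continuous_infDist_pt _).pow 2

lemma int_sq {η : Measure (Ed d)} (h2 : Integrable (fun x => ‖x‖ ^ (2:ℝ)) η) :
    Integrable (fun x : Ed d => ‖x‖ ^ 2) η := by
  have : (fun x : Ed d => ‖x‖ ^ (2:ℝ)) = fun x => ‖x‖ ^ 2 := by
    funext x; exact Real.rpow_two _ ▸ rfl
  rwa [this] at h2

lemma int_norm {η : Measure (Ed d)} [IsProbabilityMeasure η]
    (h2 : Integrable (fun x => ‖x‖ ^ (2:ℝ)) η) :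
    Integrable (fun x : Ed d => ‖x‖) η := by
  refine ((integrable_const (1:ℝ)).add (int_sq h2)).mono'
    (continuous_norm.aestronglyMeasurable) ?_
  filter_upwards with x
  simp only [norm_norm, Pi.add_apply]
  nlinarith [norm_nonneg x, sq_nonneg (‖x‖ - 1)]

lemma int_qpsi {η : Measure (Ed d)} [IsProbabilityMeasure η]
    (G : Finset (Ed d)) (hG : G.Nonempty)
    (h2 : Integrable (fun x => ‖x‖ ^ (2:ℝ)) η) : Integrable (qpsi G) η := by
  set R : ℝ := G.sup' hG (fun a => ‖a‖) with hR
  have hGx := hG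
  obtain ⟨c0, hc0⟩ := hGx
  have hR0 : 0 ≤ R := le_trans (norm_nonneg c0) (Finset.le_sup' _ hc0)
  refine (((int_norm h2).const_mul (2*R)).add (integrable_const (R^2))).mono'
    (qpsi_continuous G).aestronglyMeasurable ?_
  filter_upwards with x
  obtain ⟨c, hc, hce⟩ := qpsi_eq_attain G hG x
  have hcR : ‖c‖ ≤ R := Finset.le_sup' _ hc
  rw [hce]
  simp only [La, Pi.add_apply, Real.norm_eq_abs]
  have hi := abs_le.mp (abs_real_inner_le_norm c x)
  have h1 : |2 * (inner ℝ c x : ℝ) - ‖c‖^2| ≤ 2*(‖c‖*‖x‖) + ‖c‖^2 := by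
    rw [abs_le]
    constructor <;> nlinarith [norm_nonneg c, sq_nonneg ‖c‖]
  nlinarith [norm_nonneg x, norm_nonneg c, mul_le_mul_of_nonneg_right hcR (norm_nonneg x)]

lemma int_infDist_sq {η : Measure (Ed d)} [IsProbabilityMeasure η]
    (G : Finset (Ed d)) (hG : G.Nonempty)
    (h2 : Integrable (fun x => ‖x‖ ^ (2:ℝ)) η) :
    Integrable (fun x : Ed d => Metric.infDist x (G : Set (Ed d)) ^ 2) η := by
  have : (fun x : Ed d => Metric.infDist x (G : Set (Ed d)) ^ 2)
      = fun x => ‖x‖^2 - qpsi G x := by funext x; simp [qpsi]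
  rw [this]
  exact (int_sq h2).sub (int_qpsi G hG h2)

lemma quantErrPow_eq {η : Measure (Ed d)} [IsProbabilityMeasure η]
    (G : Finset (Ed d)) (hG : G.Nonempty)
    (h2 : Integrable (fun x => ‖x‖ ^ (2:ℝ)) η) :
    quantErrPow 2 G η = ∫ x, ‖x‖^2 ∂η - ∫ x, qpsi G x ∂η := by
  rw [← integral_sub (int_sq h2) (int_qpsi G hG h2)]
  unfold quantErrPow
  congr 1
  funext x
  rw [Real.rpow_two]
  simp [qpsi]

lemma quantErrPow_natpow (G : Finset (Ed d)) (η : Measure (Ed d)) :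
    quantErrPow 2 G η = ∫ x, Metric.infDist x (G : Set (Ed d)) ^ (2:ℕ) ∂η := by
  unfold quantErrPow
  congr 1
  funext x
  rw [Real.rpow_two]

lemma int_sub_const {μ : Measure (Ed d)} [IsProbabilityMeasure μ]
    (hμ2 : Integrable (fun x => ‖x‖ ^ (2:ℝ)) μ) (a : Ed d) :
    Integrable (fun x : Ed d => x - a) μ := by
  refine (((int_norm hμ2).add (integrable_const ‖a‖))).mono'
    ((measurable_id.sub_const a).aestronglyMeasurable) ?_
  filter_upwards with x
  simpa using norm_sub_le x a

lemma quantErrPow_proj {μ : Measure (Ed d)} {Γ : Finset (Ed d)}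
    {g : Ed d → Ed d} (hg : IsNearestProj Γ g) :
    quantErrPow 2 Γ μ = ∫ x, ‖x - g x‖ ^ 2 ∂μ := by
  rw [quantErrPow_natpow]
  congr 1
  funext x
  rw [(hg.2 x).2]

theorem stationarity {μ : Measure (Ed d)} [IsProbabilityMeasure μ]
    (hμ2 : Integrable (fun x => ‖x‖ ^ (2:ℝ)) μ)
    {N : ℕ} {Γ : Finset (Ed d)} (hΓ : IsOptimalQuantizer 2 N Γ μ)
    {g : Ed d → Ed d} (hg : IsNearestProj Γ g)
    {a : Ed d} (ha : a ∈ Γ) :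
    ∫ x in g ⁻¹' {a}, (x - a) ∂μ = 0 := by
  set C : Set (Ed d) := g ⁻¹' {a} with hC
  have hCm : MeasurableSet C := hg.1 (measurableSet_singleton a)
  set m : Ed d := ∫ x in C, (x - a) ∂μ with hm
  set c : ℝ := (μ C).toReal with hcdef
  have hc0 : 0 ≤ c := ENNReal.toReal_nonneg
  -- key inequality for all h
  have key : ∀ h : Ed d, 2 * (inner ℝ h m : ℝ) ≤ c * ‖h‖ ^ 2 := by
    intro h
    set G' : Finset (Ed d) := insert (a + h) (Γ.erase a) with hG'
    have hG'ne : G'.Nonempty := Finset.insert_nonempty _ _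
    have hG'card : G'.card ≤ N := by
      calc G'.card ≤ (Γ.erase a).card + 1 := Finset.card_insert_le _ _
      _ = (Γ.card - 1) + 1 := by rw [Finset.card_erase_of_mem ha]
      _ = Γ.card := Nat.succ_pred_eq_of_pos (Finset.card_pos.mpr hΓ.1)
      _ ≤ N := hΓ.2.1
    have hopt := hΓ.2.2 G' hG'ne hG'card
    -- pointwise bound
    set s : Ed d → Ed d := C.indicator (fun _ => h) with hs
    have hpt : ∀ x, Metric.infDist x (G' : Set (Ed d)) ^ 2 ≤ ‖x - (g x + s x)‖ ^ 2 := by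
      intro x
      have hmem : g x + s x ∈ G' := by
        by_cases hx : x ∈ C
        · have : g x = a := hx
          rw [this, hs, Set.indicator_of_mem hx]
          exact Finset.mem_insert_self _ _
        · rw [hs, Set.indicator_of_notMem hx, add_zero]
          have hga : g x ≠ a := hx
          exact Finset.mem_insert_of_mem (Finset.mem_erase.mpr ⟨hga, (hg.2 x).1⟩)
      have h1 : Metric.infDist x (G' : Set (Ed d)) ≤ ‖x - (g x + s x)‖ := by
        simpa [dist_eq_norm] using
          Metric.infDist_le_dist_of_mem (show g x + s x ∈ (G' : Set (Ed d)) from hmem)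
      exact pow_le_pow_left₀ Metric.infDist_nonneg h1 2
    -- integrability of pieces
    have hA : Integrable (fun x => ‖x - g x‖ ^ 2) μ := by
      have : (fun x : Ed d => ‖x - g x‖ ^ 2)
          = fun x => Metric.infDist x (Γ : Set (Ed d)) ^ 2 := by
        funext x; rw [(hg.2 x).2]
      rw [this]; exact int_infDist_sq Γ hΓ.1 hμ2
    have hBfun : (fun x => (inner ℝ (x - g x) (s x) : ℝ))
        = C.indicator (fun x => (inner ℝ (x - a) h : ℝ)) := by
      funext x
      by_cases hx : x ∈ C
      · have hgx : g x = a := hx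
        rw [Set.indicator_of_mem hx, hs, Set.indicator_of_mem hx, hgx]
      · rw [Set.indicator_of_notMem hx, hs, Set.indicator_of_notMem hx, inner_zero_right]
    have hBm : Measurable (fun x : Ed d => (inner ℝ (x - a) h : ℝ)) :=
      (measurable_id.sub_const a).inner measurable_const
    have hB : Integrable (fun x => (inner ℝ (x - g x) (s x) : ℝ)) μ := by
      rw [hBfun]
      exact ((int_sub_const hμ2 a).norm.const_mul ‖h‖).mono'
        ((hBm.indicator hCm).aestronglyMeasurable)
        (by
          filter_upwards with x
          by_cases hx : x ∈ C
          · rw [Set.indicator_of_mem hx]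
            calc ‖(inner ℝ (x - a) h : ℝ)‖ ≤ ‖x - a‖ * ‖h‖ := by
                  simpa using abs_real_inner_le_norm (x-a) h
            _ = ‖h‖ * ‖x - a‖ := mul_comm _ _
          · rw [Set.indicator_of_notMem hx]
            simp [mul_nonneg (norm_nonneg h) (norm_nonneg (x - a))])
    have hD : Integrable (fun x => ‖s x‖ ^ 2) μ := by
      have : (fun x => ‖s x‖ ^ 2) = C.indicator (fun _ => ‖h‖ ^ 2) := by
        funext x
        by_cases hx : x ∈ C
        · rw [hs, Set.indicator_of_mem hx, Set.indicator_of_mem hx]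
        · rw [hs, Set.indicator_of_notMem hx, Set.indicator_of_notMem hx, norm_zero]
          simp
      rw [this]
      exact (integrable_const _).indicator hCm
    have hRHSint : Integrable (fun x => ‖x - (g x + s x)‖ ^ 2) μ := by
      have : (fun x => ‖x - (g x + s x)‖ ^ 2)
          = fun x => ‖x - g x‖^2 - 2 * (inner ℝ (x - g x) (s x) : ℝ) + ‖s x‖^2 := by
        funext x
        have : x - (g x + s x) = (x - g x) - s x := by abel
        rw [this, norm_sub_sq_real]
      rw [this]
      exact (hA.sub (hB.const_mul 2)).add hD
    -- integral inequality
    have hint : quantErrPow 2 G' μ ≤ ∫ x, ‖x - (g x + s x)‖ ^ 2 ∂μ := by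
      rw [quantErrPow_natpow]
      exact integral_mono (int_infDist_sq G' hG'ne hμ2) hRHSint hpt
    -- compute RHS
    have hBint : ∫ x, (inner ℝ (x - g x) (s x) : ℝ) ∂μ = (inner ℝ m h : ℝ) := by
      rw [hBfun, integral_indicator hCm]
      have : ∀ x, (inner ℝ (x - a) h : ℝ) = (inner ℝ h (x - a) : ℝ) := fun x => real_inner_comm _ _
      calc ∫ x in C, (inner ℝ (x - a) h : ℝ) ∂μ = ∫ x in C, (inner ℝ h (x - a) : ℝ) ∂μ := by
            simp_rw [this]
      _ = (inner ℝ h m : ℝ) := integral_inner ((int_sub_const hμ2 a).integrableOn) h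
      _ = (inner ℝ m h : ℝ) := real_inner_comm _ _
    have hDint : ∫ x, ‖s x‖ ^ 2 ∂μ = c * ‖h‖^2 := by
      have : (fun x => ‖s x‖ ^ 2) = C.indicator (fun _ => ‖h‖ ^ 2) := by
        funext x
        by_cases hx : x ∈ C
        · rw [hs, Set.indicator_of_mem hx, Set.indicator_of_mem hx]
        · rw [hs, Set.indicator_of_notMem hx, Set.indicator_of_notMem hx, norm_zero]
          simp
      rw [this, integral_indicator_const _ hCm, smul_eq_mul, measureReal_def]
    have hRHS : ∫ x, ‖x - (g x + s x)‖ ^ 2 ∂μ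
        = quantErrPow 2 Γ μ - 2 * (inner ℝ m h : ℝ) + c * ‖h‖^2 := by
      have heq : (fun x => ‖x - (g x + s x)‖ ^ 2)
          = fun x => ‖x - g x‖^2 - 2 * (inner ℝ (x - g x) (s x) : ℝ) + ‖s x‖^2 := by
        funext x
        have : x - (g x + s x) = (x - g x) - s x := by abel
        rw [this, norm_sub_sq_real]
      have hB2 : Integrable (fun x => 2 * (inner ℝ (x - g x) (s x) : ℝ)) μ := hB.const_mul 2
      have hAB : Integrable (fun x => ‖x - g x‖ ^ 2 - 2 * (inner ℝ (x - g x) (s x) : ℝ)) μ :=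
        hA.sub hB2
      rw [heq, integral_add hAB hD, integral_sub hA hB2,
        integral_const_mul, hBint, hDint, quantErrPow_proj hg]
    have := hopt
    rw [hRHS] at hint
    have := le_trans this hint
    rw [real_inner_comm]
    linarith
  -- conclude m = 0
  by_contra hne
  have hmn : ‖m‖ ≠ 0 := norm_ne_zero_iff.mpr hne
  have hm0 : 0 < ‖m‖^2 := by positivity
  set t : ℝ := 1 / (c + 1) with ht
  have ht0 : 0 < t := by positivity
  have := key (t • m)
  rw [real_inner_smul_left, real_inner_self_eq_norm_sq, norm_smul] at this
  have habs : ‖t‖ = t := abs_of_pos ht0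
  rw [habs, mul_pow] at this
  have hct : c * t < 1 := by
    rw [ht]
    rw [mul_one_div, div_lt_one (by linarith)]
    linarith
  have h1 : c * t * (t * ‖m‖^2) < 1 * (t * ‖m‖^2) :=
    mul_lt_mul_of_pos_right hct (by positivity)
  nlinarith

lemma qpsi_eq_f {Γ : Finset (Ed d)} {f : Ed d → Ed d} (hf : IsNearestProj Γ f) (x : Ed d) :
    qpsi Γ x = La (f x) x := by
  rw [La_eq, qpsi, (hf.2 x).2]

lemma qpsi_comp_f {Γ : Finset (Ed d)} {f : Ed d → Ed d} (hf : IsNearestProj Γ f) (x : Ed d) :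
    qpsi Γ (f x) = ‖f x‖ ^ 2 := by
  rw [qpsi, Metric.infDist_zero_of_mem (by exact_mod_cast (hf.2 x).1)]
  simp

lemma int_inner_f_cell {μ : Measure (Ed d)} [IsProbabilityMeasure μ]
    (hμ2 : Integrable (fun x => ‖x‖ ^ (2:ℝ)) μ)
    {Γ : Finset (Ed d)} {f : Ed d → Ed d} (hf : IsNearestProj Γ f) {a : Ed d} :
    Integrable ((f ⁻¹' {a}).indicator (fun x => (inner ℝ a (x - a) : ℝ))) μ := by
  have hCm : MeasurableSet (f ⁻¹' {a}) := hf.1 (measurableSet_singleton a)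
  refine (((int_norm hμ2).const_mul ‖a‖).add (integrable_const (‖a‖^2))).mono'
    ((((measurable_const).inner (measurable_id.sub_const a)).indicator hCm).aestronglyMeasurable) ?_
  filter_upwards with x
  have hg0 : (0:ℝ) ≤ ‖a‖ * ‖x‖ + ‖a‖^2 := by positivity
  by_cases hx : x ∈ f ⁻¹' {a}
  · rw [Set.indicator_of_mem hx]
    have h1 : ‖(inner ℝ a (x - a) : ℝ)‖ ≤ ‖a‖ * ‖x - a‖ := by
      simpa using abs_real_inner_le_norm a (x - a)
    have h2 : ‖x - a‖ ≤ ‖x‖ + ‖a‖ := norm_sub_le x a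
    have h3 : ‖a‖ * ‖x - a‖ ≤ ‖a‖ * (‖x‖ + ‖a‖) :=
      mul_le_mul_of_nonneg_left h2 (norm_nonneg a)
    simp only [Pi.add_apply]
    nlinarith
  · rw [Set.indicator_of_notMem hx]
    simpa using hg0

lemma inner_proj_zero {μ : Measure (Ed d)} [IsProbabilityMeasure μ]
    (hμ2 : Integrable (fun x => ‖x‖ ^ (2:ℝ)) μ)
    {N : ℕ} {Γ : Finset (Ed d)} (hΓ : IsOptimalQuantizer 2 N Γ μ)
    {g : Ed d → Ed d} (hg : IsNearestProj Γ g) :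
    ∫ x, (inner ℝ (g x) (x - g x) : ℝ) ∂μ = 0 := by
  have hsum : (fun x => (inner ℝ (g x) (x - g x) : ℝ))
      = fun x => ∑ a ∈ Γ, (g ⁻¹' {a}).indicator (fun y => (inner ℝ a (y - a) : ℝ)) x := by
    funext x
    rw [Finset.sum_eq_single_of_mem (g x) (hg.2 x).1]
    · rw [Set.indicator_of_mem (by exact rfl)]
    · intro b _ hb
      rw [Set.indicator_of_notMem]
      exact fun hx => hb (hx.symm)
  rw [hsum, integral_finset_sum Γ (fun a _ => int_inner_f_cell hμ2 hg)]
  refine Finset.sum_eq_zero (fun a ha => ?_)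
  have hCm : MeasurableSet (g ⁻¹' {a}) := hg.1 (measurableSet_singleton a)
  rw [integral_indicator hCm,
    integral_inner ((int_sub_const hμ2 a).integrableOn) a,
    stationarity hμ2 hΓ hg ha, inner_zero_right]

lemma tieSet_measurable (a : Ed d) (G : Finset (Ed d)) :
    MeasurableSet {x : Ed d | ‖x - a‖ = Metric.infDist x (G : Set (Ed d))} :=
  measurableSet_eq_fun (by fun_prop) (Metric.continuous_infDist_pt _).measurable

lemma tie_null {μ : Measure (Ed d)} [IsProbabilityMeasure μ]
    (hμ2 : Integrable (fun x => ‖x‖ ^ (2:ℝ)) μ)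
    {N : ℕ} {Γ : Finset (Ed d)} (hΓ : IsOptimalQuantizer 2 N Γ μ)
    {f : Ed d → Ed d} (hf : IsNearestProj Γ f)
    {a b : Ed d} (ha : a ∈ Γ) (hb : b ∈ Γ) (hab : a ≠ b) :
    μ (f ⁻¹' {b} ∩ {x : Ed d | ‖x - a‖ = Metric.infDist x (Γ : Set (Ed d))}) = 0 := by
  classical
  set S : Set (Ed d) := f ⁻¹' {b} ∩ {x : Ed d | ‖x - a‖ = Metric.infDist x (Γ : Set (Ed d))}
    with hSdef
  have hSm : MeasurableSet S :=
    (hf.1 (measurableSet_singleton b)).inter (tieSet_measurable a Γ)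
  set f' : Ed d → Ed d := S.piecewise (fun _ => a) f with hf'def
  have hf' : IsNearestProj Γ f' := by
    refine ⟨Measurable.piecewise hSm measurable_const hf.1, fun x => ?_⟩
    by_cases hx : x ∈ S
    · rw [hf'def, Set.piecewise_eq_of_mem _ _ _ hx]
      exact ⟨ha, hx.2⟩
    · rw [hf'def, Set.piecewise_eq_of_notMem _ _ _ hx]
      exact hf.2 x
  -- preimage identities
  have hSb : S ⊆ f ⁻¹' {b} := Set.inter_subset_left
  have hpa : f' ⁻¹' {a} = S ∪ f ⁻¹' {a} := by
    ext x
    simp only [Set.mem_preimage, Set.mem_singleton_iff, Set.mem_union]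
    by_cases hx : x ∈ S
    · simp [hf'def, Set.piecewise_eq_of_mem _ _ _ hx, hx]
    · simp [hf'def, Set.piecewise_eq_of_notMem _ _ _ hx, hx]
  have hpb : f' ⁻¹' {b} = f ⁻¹' {b} \ S := by
    ext x
    simp only [Set.mem_preimage, Set.mem_singleton_iff, Set.mem_diff]
    by_cases hx : x ∈ S
    · simp only [hf'def, Set.piecewise_eq_of_mem _ _ _ hx]
      simp [hx, hab]
    · simp [hf'def, Set.piecewise_eq_of_notMem _ _ _ hx, hx]
  have hdisja : Disjoint S (f ⁻¹' {a}) := by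
    rw [Set.disjoint_left]
    intro x hx hxa
    exact hab (by rw [← hxa, ← (hSb hx : f x = b)] )
  have hCam : MeasurableSet (f ⁻¹' {a}) := hf.1 (measurableSet_singleton a)
  -- ∫_S (x - a) = 0
  have hSa : ∫ x in S, (x - a) ∂μ = 0 := by
    have h0 := stationarity hμ2 hΓ hf' ha
    rw [hpa, setIntegral_union hdisja hCam
      ((int_sub_const hμ2 a).integrableOn) ((int_sub_const hμ2 a).integrableOn),
      stationarity hμ2 hΓ hf ha, add_zero] at h0
    exact h0
  -- ∫_S (x - b) = 0
  have hSbint : ∫ x in S, (x - b) ∂μ = 0 := by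
    have h0 := stationarity hμ2 hΓ hf hb
    have hsplit : f ⁻¹' {b} = (f ⁻¹' {b} \ S) ∪ S := (Set.diff_union_of_subset hSb).symm
    rw [hsplit, setIntegral_union disjoint_sdiff_self_left hSm
      ((int_sub_const hμ2 b).integrableOn) ((int_sub_const hμ2 b).integrableOn)] at h0
    have h1 := stationarity hμ2 hΓ hf' hb
    rw [hpb] at h1
    rw [h1, zero_add] at h0
    exact h0
  -- combine
  have hconst : ∫ x in S, (b - a) ∂μ = 0 := by
    have : (fun x : Ed d => b - a) = fun x => (x - a) - (x - b) := by
      funext x; abel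
    rw [this, integral_sub ((int_sub_const hμ2 a).integrableOn)
      ((int_sub_const hμ2 b).integrableOn), hSa, hSbint, sub_zero]
  rw [setIntegral_const] at hconst
  rcases smul_eq_zero.mp hconst with h | h
  · exact (ENNReal.toReal_eq_zero_iff _).mp h |>.resolve_right (measure_ne_top μ S)
  · exact absurd (sub_eq_zero.mp h).symm hab

lemma closed_cell_measure {μ : Measure (Ed d)} [IsProbabilityMeasure μ]
    (hμ2 : Integrable (fun x => ‖x‖ ^ (2:ℝ)) μ)
    {N : ℕ} {Γ : Finset (Ed d)} (hΓ : IsOptimalQuantizer 2 N Γ μ)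
    {f : Ed d → Ed d} (hf : IsNearestProj Γ f) {a : Ed d} (ha : a ∈ Γ) :
    μ {x : Ed d | ‖x - a‖ = Metric.infDist x (Γ : Set (Ed d))} = μ (f ⁻¹' {a}) := by
  set Cb : Set (Ed d) := {x : Ed d | ‖x - a‖ = Metric.infDist x (Γ : Set (Ed d))} with hCb
  have hsub : f ⁻¹' {a} ⊆ Cb := by
    intro x hx
    simp only [Set.mem_preimage, Set.mem_singleton_iff] at hx
    show ‖x - a‖ = Metric.infDist x (Γ : Set (Ed d))
    rw [← hx]
    exact (hf.2 x).2
  have h0 : μ (⋃ b ∈ Γ.erase a, (f ⁻¹' {b} ∩ Cb)) = 0 := by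
    refine (measure_biUnion_null_iff (Γ.erase a).countable_toSet).mpr (fun b hb => ?_)
    obtain ⟨hba, hbΓ⟩ := Finset.mem_erase.mp hb
    exact tie_null hμ2 hΓ hf ha hbΓ (Ne.symm hba)
  refine le_antisymm ?_ (measure_mono hsub)
  have hcover : Cb ⊆ f ⁻¹' {a} ∪ (⋃ b ∈ Γ.erase a, (f ⁻¹' {b} ∩ Cb)) := by
    intro x hx
    by_cases hxa : f x = a
    · exact Or.inl hxa
    · refine Or.inr (Set.mem_biUnion (Finset.mem_erase.mpr ⟨hxa, (hf.2 x).1⟩) ⟨rfl, hx⟩)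
  calc μ Cb ≤ μ (f ⁻¹' {a} ∪ (⋃ b ∈ Γ.erase a, (f ⁻¹' {b} ∩ Cb))) := measure_mono hcover
  _ ≤ μ (f ⁻¹' {a}) + μ (⋃ b ∈ Γ.erase a, (f ⁻¹' {b} ∩ Cb)) := measure_union_le _ _
  _ = μ (f ⁻¹' {a}) := by rw [h0, add_zero]

lemma La_continuous' (a : Ed d) : Continuous (La a) := by
  have h : Continuous fun x : Ed d => (inner ℝ a x : ℝ) := continuous_const.inner continuous_id
  exact (continuous_const.mul h).sub continuous_const

lemma La_continuous (a : Ed d) (t : ℝ) : Continuous (fun x => La a x + t) :=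
  (La_continuous' a).add continuous_const

lemma La_convexOn (a : Ed d) (t : ℝ) : ConvexOn ℝ univ (fun x => La a x + t) := by
  refine ⟨convex_univ, fun x _ y _ p q hp hq hpq => le_of_eq ?_⟩
  simp only [La, inner_add_right, inner_smul_right, smul_eq_mul]
  linear_combination (‖a‖^2 - t) * hpq

lemma int_La {η : Measure (Ed d)} [IsProbabilityMeasure η]
    (h2 : Integrable (fun x => ‖x‖ ^ (2:ℝ)) η) (a : Ed d) (t : ℝ) :
    Integrable (fun x => La a x + t) η := by
  refine (((int_norm h2).const_mul (2*‖a‖)).add (integrable_const (‖a‖^2 + |t|))).mono'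
    (La_continuous a t).aestronglyMeasurable ?_
  filter_upwards with x
  have hi := abs_le.mp (abs_real_inner_le_norm a x)
  have ht := le_abs_self t
  have ht' := neg_abs_le t
  simp only [La, Pi.add_apply, Real.norm_eq_abs]
  rw [abs_le]
  constructor <;> nlinarith [norm_nonneg a, norm_nonneg x, sq_nonneg ‖a‖]

lemma int_qpsi_map {μ : Measure (Ed d)} [IsProbabilityMeasure μ]
    {Γ : Finset (Ed d)} {f : Ed d → Ed d} (hf : IsNearestProj Γ f) (hΓne : Γ.Nonempty)
    (G : Finset (Ed d)) :
    Integrable (qpsi G) (μ.map f) := by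
  have haesm : AEStronglyMeasurable (qpsi G) (μ.map f) :=
    (qpsi_continuous G).aestronglyMeasurable
  rw [integrable_map_measure haesm hf.1.aemeasurable]
  set M : ℝ := Γ.sup' hΓne (fun a => |qpsi G a|) with hM
  refine (integrable_const M).mono'
    (((qpsi_continuous G).measurable.comp hf.1).aestronglyMeasurable) ?_
  filter_upwards with x
  exact Finset.le_sup' (fun a => |qpsi G a|) (hf.2 x).1

lemma integral_qpsi_map {μ : Measure (Ed d)}
    {Γ : Finset (Ed d)} {f : Ed d → Ed d} (hf : IsNearestProj Γ f) :
    ∫ x, qpsi Γ x ∂(μ.map f) = ∫ x, ‖f x‖^2 ∂μ := by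
  rw [integral_map hf.1.aemeasurable (qpsi_continuous Γ).aestronglyMeasurable]
  congr 1
  funext x
  exact qpsi_comp_f hf x

lemma int_normf_sq {μ : Measure (Ed d)} [IsProbabilityMeasure μ]
    {Γ : Finset (Ed d)} {f : Ed d → Ed d} (hf : IsNearestProj Γ f) (hΓne : Γ.Nonempty) :
    Integrable (fun x => ‖f x‖^2) μ := by
  set M : ℝ := Γ.sup' hΓne (fun a => ‖a‖^2) with hM
  refine (integrable_const M).mono' ((hf.1.norm.pow_const 2).aestronglyMeasurable) ?_
  filter_upwards with x
  have : ‖f x‖^2 ≤ M := Finset.le_sup' (fun a => ‖a‖^2) (hf.2 x).1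
  simpa [abs_of_nonneg (sq_nonneg ‖f x‖)] using this

lemma integral_qpsi_opt {μ : Measure (Ed d)} [IsProbabilityMeasure μ]
    (hμ2 : Integrable (fun x => ‖x‖ ^ (2:ℝ)) μ)
    {N : ℕ} {Γ : Finset (Ed d)} (hΓ : IsOptimalQuantizer 2 N Γ μ)
    {f : Ed d → Ed d} (hf : IsNearestProj Γ f) :
    ∫ x, qpsi Γ x ∂μ = ∫ x, ‖f x‖^2 ∂μ := by
  have hdiff : (fun x => qpsi Γ x - ‖f x‖^2) = fun x => 2 * (inner ℝ (f x) (x - f x) : ℝ) := by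
    funext x
    rw [qpsi_eq_f hf x]
    simp only [La, inner_sub_right, real_inner_self_eq_norm_sq]
    ring
  have h1 : Integrable (fun x => qpsi Γ x) μ := int_qpsi Γ hΓ.1 hμ2
  have h2 : Integrable (fun x => ‖f x‖^2) μ := int_normf_sq hf hΓ.1
  have h3 : ∫ x, (qpsi Γ x - ‖f x‖^2) ∂μ = 0 := by
    rw [hdiff, integral_const_mul, inner_proj_zero hμ2 hΓ hf, mul_zero]
  rw [integral_sub h1 h2] at h3
  linarith

lemma integral_qpsi_nu {μ ν : Measure (Ed d)} [IsProbabilityMeasure μ] [IsProbabilityMeasure ν]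
    (hμ2 : Integrable (fun x => ‖x‖ ^ (2:ℝ)) μ) (hν2 : Integrable (fun x => ‖x‖ ^ (2:ℝ)) ν)
    {N : ℕ} {Γ : Finset (Ed d)} (hΓ : IsOptimalQuantizer 2 N Γ μ)
    {f : Ed d → Ed d} (hf : IsNearestProj Γ f)
    (h1 : ConvexOrder (μ.map f) ν) (h2 : ConvexOrder ν μ) :
    ∫ x, qpsi Γ x ∂ν = ∫ x, qpsi Γ x ∂μ := by
  have hle2 : ∫ x, qpsi Γ x ∂ν ≤ ∫ x, qpsi Γ x ∂μ :=
    h2 (qpsi Γ) (qpsi_convex Γ hΓ.1) (int_qpsi Γ hΓ.1 hν2) (int_qpsi Γ hΓ.1 hμ2)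
  have hle1 : ∫ x, qpsi Γ x ∂(μ.map f) ≤ ∫ x, qpsi Γ x ∂ν :=
    h1 (qpsi Γ) (qpsi_convex Γ hΓ.1) (int_qpsi_map hf hΓ.1 Γ) (int_qpsi Γ hΓ.1 hν2)
  rw [integral_qpsi_map hf, ← integral_qpsi_opt hμ2 hΓ hf] at hle1
  linarith

lemma partA {μ ν : Measure (Ed d)} [IsProbabilityMeasure μ] [IsProbabilityMeasure ν]
    (hμ2 : Integrable (fun x => ‖x‖ ^ (2:ℝ)) μ) (hν2 : Integrable (fun x => ‖x‖ ^ (2:ℝ)) ν)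
    {N : ℕ} {Γ : Finset (Ed d)} (hΓ : IsOptimalQuantizer 2 N Γ μ)
    {f : Ed d → Ed d} (hf : IsNearestProj Γ f)
    (h1 : ConvexOrder (μ.map f) ν) (h2 : ConvexOrder ν μ) :
    IsOptimalQuantizer 2 N Γ ν := by
  refine ⟨hΓ.1, hΓ.2.1, fun Γ' hne' hcard' => ?_⟩
  rw [quantErrPow_eq Γ hΓ.1 hν2, quantErrPow_eq Γ' hne' hν2]
  have hmu := hΓ.2.2 Γ' hne' hcard'
  rw [quantErrPow_eq Γ hΓ.1 hμ2, quantErrPow_eq Γ' hne' hμ2] at hmu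
  have hG'nu : ∫ x, qpsi Γ' x ∂ν ≤ ∫ x, qpsi Γ' x ∂μ :=
    h2 (qpsi Γ') (qpsi_convex Γ' hne') (int_qpsi Γ' hne' hν2) (int_qpsi Γ' hne' hμ2)
  have heq := integral_qpsi_nu hμ2 hν2 hΓ hf h1 h2
  linarith

lemma mass_le {μ ν : Measure (Ed d)} [IsProbabilityMeasure μ] [IsProbabilityMeasure ν]
    (hμ2 : Integrable (fun x => ‖x‖ ^ (2:ℝ)) μ) (hν2 : Integrable (fun x => ‖x‖ ^ (2:ℝ)) ν)
    {N : ℕ} {Γ : Finset (Ed d)} (hΓ : IsOptimalQuantizer 2 N Γ μ)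
    {f : Ed d → Ed d} (hf : IsNearestProj Γ f)
    (h1 : ConvexOrder (μ.map f) ν) (h2 : ConvexOrder ν μ)
    {a : Ed d} (ha : a ∈ Γ) :
    ν (f ⁻¹' {a}) ≤ μ (f ⁻¹' {a}) := by
  have hCm : MeasurableSet (f ⁻¹' {a}) := hf.1 (measurableSet_singleton a)
  set C : Set (Ed d) := f ⁻¹' {a} with hCdef
  have step1 : ∀ t : ℝ, 0 < t → ν C ≤ μ {x | qpsi Γ x - La a x < t} := by
    intro t ht
    set W : Set (Ed d) := {x | qpsi Γ x - La a x < t} with hW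
    have hWm : MeasurableSet W :=
      measurableSet_lt ((qpsi_continuous Γ).sub (La_continuous' a)).measurable
        measurable_const
    set φ : Ed d → ℝ := fun x => max (qpsi Γ x) (La a x + t) with hφ
    have hφconv : ConvexOn ℝ univ φ := by
      have := (qpsi_convex Γ hΓ.1).sup (La_convexOn a t)
      convert this using 1
      all_goals rfl
    have hφcont : Continuous φ := (qpsi_continuous Γ).max (La_continuous a t)
    have hφint : ∀ (η : Measure (Ed d)) [IsProbabilityMeasure η],
        Integrable (fun x => ‖x‖ ^ (2:ℝ)) η → Integrable φ η := by
      intro η _ hη2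
      refine ((int_qpsi Γ hΓ.1 hη2).abs.add (int_La hη2 a t).abs).mono'
        hφcont.aestronglyMeasurable ?_
      filter_upwards with x
      simp only [Real.norm_eq_abs, Pi.add_apply, hφ]
      refine (abs_max_le_max_abs_abs).trans ?_
      exact max_le (le_add_of_nonneg_right (abs_nonneg _))
        (le_add_of_nonneg_left (abs_nonneg _))
    have hlow : ∫ x, qpsi Γ x ∂ν + t * (ν C).toReal ≤ ∫ x, φ x ∂ν := by
      have hptw : ∀ x, qpsi Γ x + C.indicator (fun _ => t) x ≤ φ x := by
        intro x
        by_cases hx : x ∈ C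
        · rw [Set.indicator_of_mem hx]
          have hfx : f x = a := hx
          have : qpsi Γ x = La a x := by rw [qpsi_eq_f hf x, hfx]
          rw [this]
          exact le_max_right _ _
        · rw [Set.indicator_of_notMem hx, add_zero]
          exact le_max_left _ _
      have hintl : Integrable (fun x => qpsi Γ x + C.indicator (fun _ => t) x) ν :=
        (int_qpsi Γ hΓ.1 hν2).add ((integrable_const t).indicator hCm)
      have := integral_mono hintl (hφint ν hν2) hptw
      rw [integral_add (int_qpsi Γ hΓ.1 hν2) ((integrable_const t).indicator hCm),
        integral_indicator_const _ hCm, smul_eq_mul, measureReal_def] at this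
      linarith
    have hmid : ∫ x, φ x ∂ν ≤ ∫ x, φ x ∂μ := h2 φ hφconv (hφint ν hν2) (hφint μ hμ2)
    have hup : ∫ x, φ x ∂μ ≤ ∫ x, qpsi Γ x ∂μ + t * (μ W).toReal := by
      have hptw : ∀ x, φ x ≤ qpsi Γ x + W.indicator (fun _ => t) x := by
        intro x
        by_cases hx : x ∈ W
        · rw [Set.indicator_of_mem hx]
          refine max_le (by linarith) ?_
          have := La_le_qpsi Γ hΓ.1 ha x
          linarith
        · rw [Set.indicator_of_notMem hx, add_zero]
          have hxW : ¬ (qpsi Γ x - La a x < t) := hx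
          push_neg at hxW
          exact max_le le_rfl (by linarith)
      have hintr : Integrable (fun x => qpsi Γ x + W.indicator (fun _ => t) x) μ :=
        (int_qpsi Γ hΓ.1 hμ2).add ((integrable_const t).indicator hWm)
      have := integral_mono (hφint μ hμ2) hintr hptw
      rw [integral_add (int_qpsi Γ hΓ.1 hμ2) ((integrable_const t).indicator hWm),
        integral_indicator_const _ hWm, smul_eq_mul, measureReal_def] at this
      linarith
    have heq := integral_qpsi_nu hμ2 hν2 hΓ hf h1 h2
    have hreal : (ν C).toReal ≤ (μ W).toReal := by
      have h3 : t * (ν C).toReal ≤ t * (μ W).toReal := by linarith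
      exact le_of_mul_le_mul_left h3 ht
    exact (ENNReal.toReal_le_toReal (measure_ne_top ν C) (measure_ne_top μ W)).mp hreal
  set s : ℕ → Set (Ed d) := fun n => {x | qpsi Γ x - La a x < 1 / (n+1)} with hs
  have hsm : ∀ n, MeasurableSet (s n) := fun n =>
    measurableSet_lt ((qpsi_continuous Γ).sub (La_continuous' a)).measurable
      measurable_const
  have hmono : Antitone s := by
    intro n m hnm x hx
    have hc : (n:ℝ) ≤ m := Nat.cast_le.mpr hnm
    have h1n : (1:ℝ) / (m+1) ≤ 1 / (n+1) :=
      one_div_le_one_div_of_le (by positivity) (by linarith)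
    exact lt_of_lt_of_le hx h1n
  have hiInter : (⋂ n, s n) = {x : Ed d | ‖x - a‖ = Metric.infDist x (Γ : Set (Ed d))} := by
    ext x
    simp only [Set.mem_iInter, hs, Set.mem_setOf_eq]
    have hD : qpsi Γ x - La a x = ‖x - a‖^2 - Metric.infDist x (Γ : Set (Ed d))^2 := by
      rw [qpsi, La_eq]; ring
    have hD0 : 0 ≤ qpsi Γ x - La a x := by linarith [La_le_qpsi Γ hΓ.1 ha x]
    constructor
    · intro h
      have hle : qpsi Γ x - La a x ≤ 0 := by
        by_contra hc
        push_neg at hc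
        obtain ⟨n, hn⟩ := exists_nat_one_div_lt hc
        exact absurd (h n) (by push_neg; exact_mod_cast hn.le)
      have : qpsi Γ x - La a x = 0 := le_antisymm hle hD0
      rw [hD] at this
      nlinarith [norm_nonneg (x - a), Metric.infDist_nonneg (x := x) (s := (Γ : Set (Ed d)))]
    · intro h n
      have : qpsi Γ x - La a x = 0 := by rw [hD, h]; ring
      rw [this]
      positivity
  have htend := MeasureTheory.tendsto_measure_iInter_atTop (μ := μ) (s := s)
    (fun n => (hsm n).nullMeasurableSet) hmono ⟨0, measure_ne_top μ (s 0)⟩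
  have hbound : ν C ≤ μ (⋂ n, s n) := by
    refine ge_of_tendsto htend (Filter.Eventually.of_forall (fun n => ?_))
    exact step1 (1/(n+1)) (by positivity)
  rw [hiInter, closed_cell_measure hμ2 hΓ hf ha] at hbound
  exact hbound

lemma cells_disjoint {Γ : Finset (Ed d)} {f : Ed d → Ed d} (hf : IsNearestProj Γ f) :
    (↑Γ : Set (Ed d)).PairwiseDisjoint (fun a => f ⁻¹' {a}) := by
  intro a _ b _ hab
  rw [Function.onFun, Set.disjoint_left]
  intro x hxa hxb
  exact hab ((Set.mem_singleton_iff.mp hxa) ▸ (Set.mem_singleton_iff.mp hxb) ▸ rfl)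

lemma cells_cover {Γ : Finset (Ed d)} {f : Ed d → Ed d} (hf : IsNearestProj Γ f) :
    (⋃ a ∈ Γ, f ⁻¹' {a}) = (univ : Set (Ed d)) := by
  ext x
  simp only [Set.mem_iUnion, Set.mem_univ, iff_true, Set.mem_preimage, Set.mem_singleton_iff]
  exact ⟨f x, (hf.2 x).1, rfl⟩

lemma sum_cells {Γ : Finset (Ed d)} {f : Ed d → Ed d} (hf : IsNearestProj Γ f)
    (η : Measure (Ed d)) [IsProbabilityMeasure η] :
    ∑ a ∈ Γ, η (f ⁻¹' {a}) = 1 := by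
  rw [← measure_biUnion_finset (cells_disjoint hf)
    (fun a _ => hf.1 (measurableSet_singleton a)), cells_cover hf, measure_univ]

lemma cell_eq {Γ : Finset (Ed d)} {f : Ed d → Ed d} (hf : IsNearestProj Γ f)
    {μ ν : Measure (Ed d)} [IsProbabilityMeasure μ] [IsProbabilityMeasure ν]
    (hle : ∀ a ∈ Γ, ν (f ⁻¹' {a}) ≤ μ (f ⁻¹' {a})) :
    ∀ a ∈ Γ, ν (f ⁻¹' {a}) = μ (f ⁻¹' {a}) := by
  have hsums : ∑ a ∈ Γ, (ν (f ⁻¹' {a})).toReal = ∑ a ∈ Γ, (μ (f ⁻¹' {a})).toReal := by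
    rw [← ENNReal.toReal_sum (fun a _ => measure_ne_top ν _),
      ← ENNReal.toReal_sum (fun a _ => measure_ne_top μ _), sum_cells hf ν, sum_cells hf μ]
  have hler : ∀ a ∈ Γ, (ν (f ⁻¹' {a})).toReal ≤ (μ (f ⁻¹' {a})).toReal := fun a ha =>
    (ENNReal.toReal_le_toReal (measure_ne_top ν _) (measure_ne_top μ _)).mpr (hle a ha)
  have := (Finset.sum_eq_sum_iff_of_le hler).mp hsums
  intro a ha
  exact (ENNReal.toReal_eq_toReal_iff' (measure_ne_top ν _) (measure_ne_top μ _)).mp (this a ha)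

lemma map_eq {Γ : Finset (Ed d)} {f : Ed d → Ed d} (hf : IsNearestProj Γ f)
    {μ ν : Measure (Ed d)} [IsProbabilityMeasure μ] [IsProbabilityMeasure ν]
    (hcell : ∀ a ∈ Γ, ν (f ⁻¹' {a}) = μ (f ⁻¹' {a})) :
    ν.map f = μ.map f := by
  classical
  refine Measure.ext (fun s hs => ?_)
  rw [Measure.map_apply hf.1 hs, Measure.map_apply hf.1 hs]
  have hdecomp : f ⁻¹' s = ⋃ a ∈ Γ.filter (fun a => a ∈ s), f ⁻¹' {a} := by
    ext x
    simp only [Set.mem_preimage, Set.mem_iUnion, Finset.mem_filter, Set.mem_singleton_iff]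
    constructor
    · intro hx
      exact ⟨f x, ⟨(hf.2 x).1, hx⟩, rfl⟩
    · rintro ⟨a, ⟨_, has⟩, hfx⟩
      rw [hfx]; exact has
  have hdisj : (↑(Γ.filter (fun a => a ∈ s)) : Set (Ed d)).PairwiseDisjoint
      (fun a => f ⁻¹' {a}) :=
    (cells_disjoint hf).subset (by exact_mod_cast Finset.filter_subset _ _)
  rw [hdecomp, measure_biUnion_finset hdisj (fun a _ => hf.1 (measurableSet_singleton a)),
    measure_biUnion_finset hdisj (fun a _ => hf.1 (measurableSet_singleton a))]
  exact Finset.sum_congr rfl (fun a ha => hcell a (Finset.mem_filter.mp ha).1)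

end Stmt7Aux

theorem stmt7 (d N : ℕ) (μ : Measure (Ed d)) [IsProbabilityMeasure μ]
    (hμ2 : Integrable (fun x => ‖x‖ ^ (2 : ℝ)) μ)
    (Γ : Finset (Ed d)) (hΓ : IsOptimalQuantizer 2 N Γ μ)
    (f : Ed d → Ed d) (hf : IsNearestProj Γ f)
    (ν : Measure (Ed d)) [IsProbabilityMeasure ν]
    (hν2 : Integrable (fun x => ‖x‖ ^ (2 : ℝ)) ν)
    (h1 : ConvexOrder (μ.map f) ν) (h2 : ConvexOrder ν μ) :
    IsOptimalQuantizer 2 N Γ ν ∧ ν.map f = μ.map f := by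
  refine ⟨Stmt7Aux.partA hμ2 hν2 hΓ hf h1 h2, ?_⟩
  exact Stmt7Aux.map_eq hf
    (Stmt7Aux.cell_eq hf (fun a ha => Stmt7Aux.mass_le hμ2 hν2 hΓ hf h1 h2 ha))
end
end

section
/- Let μ be a compactly supported probability measure on ℝ^d and Γ a finite set whose convex hull contains the support of μ. Then there exists a probability measure ν supported on Γ with μ ≤_cvx ν; i.e., the set P_{≥μ}(Γ) is nonempty. -/
open MeasureTheory Set

noncomputable section

variable {E : Type*} [NormedAddCommGroup E] [NormedSpace ℝ E] [MeasurableSpace E] [BorelSpace E]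

theorem stmt8 (d : ℕ) (μ : Measure (Ed d)) [IsProbabilityMeasure μ]
    (hcomp : ∃ K : Set (Ed d), IsCompact K ∧ μ Kᶜ = 0)
    (Γ : Finset (Ed d)) (hΓ : μ ((convexHull ℝ (Γ : Set (Ed d)))ᶜ) = 0) :
    ∃ ν : Measure (Ed d), IsProbabilityMeasure ν ∧ ν ((Γ : Set (Ed d))ᶜ) = 0 ∧
      ConvexOrder μ ν := by
  classical
  have hΓne : Γ.Nonempty := by
    rcases Γ.eq_empty_or_nonempty with h | h
    · subst h
      simp only [Finset.coe_empty, convexHull_empty, compl_empty, measure_univ] at hΓ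
      exact absurd hΓ one_ne_zero
    · exact h
  -- ambient space for separation
  set S : Set (↥Γ → ℝ) := {s | ∃ φ : Ed d → ℝ, ConvexOn ℝ univ φ ∧ Integrable φ μ ∧
      s = fun x : ↥Γ => (∫ y, φ y ∂μ) - φ (x : Ed d)} with hS_def
  set O : Set (↥Γ → ℝ) := {v | ∀ x, 0 < v x} with hO_def
  have hO_open : IsOpen O := by
    have : O = ⋂ x : ↥Γ, (fun v : ↥Γ → ℝ => v x) ⁻¹' Ioi 0 := by
      ext v; simp only [mem_iInter, mem_preimage, mem_Ioi]; exact Iff.rfl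
    rw [this]
    exact isOpen_iInter_of_finite fun x => (continuous_apply x).isOpen_preimage _ isOpen_Ioi
  have hO_conv : Convex ℝ O := by
    intro v hv w hw a b ha hb hab x
    have h1 := hv x
    have h2 := hw x
    simp only [Pi.add_apply, Pi.smul_apply, smul_eq_mul]
    rcases ha.eq_or_lt with rfl | ha'
    · have hb1 : b = 1 := by linarith
      simp [hb1, h2]
    · nlinarith [mul_nonneg hb h2.le]
  have hS_conv : Convex ℝ S := by
    rintro s ⟨φ, hφc, hφi, rfl⟩ t ⟨ψ, hψc, hψi, rfl⟩ a b ha hb hab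
    refine ⟨fun y => a * φ y + b * ψ y, ?_, ?_, ?_⟩
    · exact (hφc.smul ha).add (hψc.smul hb)
    · exact (hφi.const_mul a).add (hψi.const_mul b)
    · funext x
      have : ∫ y, (a * φ y + b * ψ y) ∂μ = a * ∫ y, φ y ∂μ + b * ∫ y, ψ y ∂μ := by
        rw [integral_add (hφi.const_mul a) (hψi.const_mul b), integral_const_mul,
          integral_const_mul]
      simp only [Pi.add_apply, Pi.smul_apply, smul_eq_mul, this]
      ring
  have hzeroS : (0 : ↥Γ → ℝ) ∈ S := by
    refine ⟨fun _ => (0:ℝ), convexOn_const _ convex_univ, integrable_const _, ?_⟩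
    funext x; simp
  -- disjointness
  have hdisj : Disjoint O S := by
    rw [Set.disjoint_left]
    rintro s hsO ⟨φ, hφc, hφi, rfl⟩
    obtain ⟨y, hy, hmax⟩ := Γ.exists_max_image φ hΓne
    have hae : ∀ᵐ x ∂μ, φ x ≤ φ y := by
      rw [ae_iff]
      refine measure_mono_null ?_ hΓ
      intro x hx
      simp only [mem_setOf_eq, not_le] at hx
      intro hx'
      obtain ⟨z, hz, hle⟩ := hφc.exists_ge_of_mem_convexHull (subset_univ _) hx'
      exact absurd (hle.trans (hmax z hz)) (not_le.mpr hx)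
    have h1 : ∫ x, φ x ∂μ ≤ φ y := by
      calc ∫ x, φ x ∂μ ≤ ∫ _, φ y ∂μ := integral_mono_ae hφi (integrable_const _) hae
        _ = φ y := by simp
    have h2 : (0:ℝ) < (∫ x, φ x ∂μ) - φ y := hsO ⟨y, hy⟩
    linarith
  obtain ⟨f, u, hfO, hfS⟩ := geometric_hahn_banach_open hO_conv hO_open hS_conv hdisj
  have hu0 : u ≤ 0 := by simpa using hfS 0 hzeroS
  -- the all-ones vector
  have hone : (fun _ : ↥Γ => (1:ℝ)) ∈ O := fun x => one_pos
  have hc : f (fun _ => (1:ℝ)) < 0 := lt_of_lt_of_le (hfO _ hone) hu0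
  set c : ℝ := f (fun _ => (1:ℝ)) with hc_def
  -- f is ≤ 0 on basis vectors
  set a : ↥Γ → ℝ := fun x => - f (Pi.single x 1) with ha_def
  have ha_nonneg : ∀ x, 0 ≤ a x := by
    intro x
    rw [ha_def]
    simp only [neg_nonneg]
    by_contra h
    push_neg at h
    set ε : ℝ := f (Pi.single x 1) / (-c) / 2 with hε_def
    have hnc : 0 < -c := by linarith
    have hε : 0 < ε := by rw [hε_def]; exact div_pos (div_pos h hnc) two_pos
    have hmem : (Pi.single x 1 + ε • fun _ => (1:ℝ)) ∈ O := by
      intro z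
      simp only [Pi.add_apply, Pi.smul_apply, smul_eq_mul, mul_one]
      rcases eq_or_ne z x with rfl | hzx
      · simp [Pi.single_apply]; positivity
      · simp [Pi.single_apply, hzx]; exact hε
    have := lt_of_lt_of_le (hfO _ hmem) hu0
    rw [map_add, f.map_smul, smul_eq_mul, ← hc_def] at this
    have hc0 : c ≠ 0 := ne_of_lt hc
    have hεc : ε * c = -(f (Pi.single x 1) / 2) := by
      rw [hε_def]; field_simp
    linarith
  -- f of nonneg combinations
  have hf_expand : ∀ v : ↥Γ → ℝ, f v = ∑ x : ↥Γ, v x * f (Pi.single x 1) := by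
    intro v
    have hv : v = ∑ x : ↥Γ, Pi.single x (v x) := by
      funext z
      simp [Pi.single_apply]
    conv_lhs => rw [hv]
    rw [map_sum]
    refine Finset.sum_congr rfl fun x _ => ?_
    have hx : (Pi.single x (v x) : ↥Γ → ℝ) = v x • (Pi.single x 1 : ↥Γ → ℝ) := by
      funext z
      rcases eq_or_ne z x with rfl | hzx
      · simp
      · simp [Pi.single_apply, hzx]
    rw [hx, f.map_smul, smul_eq_mul]
  set A : ℝ := ∑ x : ↥Γ, a x with hA_def
  have hA_pos : 0 < A := by
    have : f (fun _ => (1:ℝ)) = ∑ x : ↥Γ, f (Pi.single x 1) := by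
      rw [hf_expand]; simp
    have hAc : A = -c := by
      rw [hA_def, hc_def, this, ← Finset.sum_neg_distrib]
    rw [hAc]; linarith
  -- f nonneg on S (cone argument)
  have hfS0 : ∀ s ∈ S, 0 ≤ f s := by
    rintro s ⟨φ, hφc, hφi, rfl⟩
    by_contra h
    push_neg at h
    set t : ℝ := (u - 1) / f (fun x : ↥Γ => (∫ y, φ y ∂μ) - φ (x:Ed d)) with ht_def
    have ht : 0 < t := div_pos_of_neg_of_neg (by linarith) h
    have hmem : (fun x : ↥Γ => (∫ y, (t * φ y) ∂μ) - (t * φ (x:Ed d))) ∈ S :=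
      ⟨fun y => t * φ y, hφc.smul ht.le, hφi.const_mul t, rfl⟩
    have := hfS _ hmem
    have heq : (fun x : ↥Γ => (∫ y, (t * φ y) ∂μ) - (t * φ (x:Ed d)))
        = t • fun x : ↥Γ => (∫ y, φ y ∂μ) - φ (x:Ed d) := by
      funext x
      simp only [integral_const_mul, Pi.smul_apply, smul_eq_mul]
      ring
    rw [heq, f.map_smul, smul_eq_mul, ht_def] at this
    rw [div_mul_cancel₀] at this
    · linarith
    · exact ne_of_lt h
  -- key inequality
  have hkey : ∀ φ : Ed d → ℝ, ConvexOn ℝ univ φ → Integrable φ μ →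
      ∫ y, φ y ∂μ ≤ ∑ x : ↥Γ, (a x / A) * φ (x:Ed d) := by
    intro φ hφc hφi
    have h0 := hfS0 _ ⟨φ, hφc, hφi, rfl⟩
    rw [hf_expand] at h0
    have h1 : ∑ x : ↥Γ, ((∫ y, φ y ∂μ) - φ (x:Ed d)) * (- a x) ≤ 0 → True := fun _ => trivial
    have h2 : ∑ x : ↥Γ, a x * ((∫ y, φ y ∂μ) - φ (x:Ed d)) ≤ 0 := by
      have : ∀ x : ↥Γ, ((∫ y, φ y ∂μ) - φ (x:Ed d)) * f (Pi.single x 1)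
          = - (a x * ((∫ y, φ y ∂μ) - φ (x:Ed d))) := by
        intro x; rw [ha_def]; ring
      rw [Finset.sum_congr rfl (fun x _ => this x), Finset.sum_neg_distrib] at h0
      linarith
    have h3 : A * ∫ y, φ y ∂μ ≤ ∑ x : ↥Γ, a x * φ (x:Ed d) := by
      have : ∑ x : ↥Γ, a x * ((∫ y, φ y ∂μ) - φ (x:Ed d))
          = A * ∫ y, φ y ∂μ - ∑ x : ↥Γ, a x * φ (x:Ed d) := by
        rw [hA_def, Finset.sum_mul]
        rw [← Finset.sum_sub_distrib]
        congr 1; funext x; ring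
      linarith [this ▸ h2]
    have h4 : ∫ y, φ y ∂μ ≤ (∑ x : ↥Γ, a x * φ (x:Ed d)) / A := by
      rw [le_div_iff₀ hA_pos]
      linarith [h3]
    calc ∫ y, φ y ∂μ ≤ (∑ x : ↥Γ, a x * φ (x:Ed d)) / A := h4
      _ = ∑ x : ↥Γ, (a x / A) * φ (x:Ed d) := by
          rw [Finset.sum_div]; exact Finset.sum_congr rfl fun x _ => by ring
  -- construct the measure ν
  set w : ↥Γ → ENNReal := fun x => ENNReal.ofReal (a x / A) with hw_def
  set ν : Measure (Ed d) := ∑ x : ↥Γ, w x • Measure.dirac (x : Ed d) with hν_def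
  have hw_nonneg : ∀ x : ↥Γ, 0 ≤ a x / A := fun x => div_nonneg (ha_nonneg x) hA_pos.le
  have hw_sum : ∑ x : ↥Γ, (a x / A) = 1 := by
    rw [← Finset.sum_div, ← hA_def, div_self (ne_of_gt hA_pos)]
  have hsum_w : ∑ x : ↥Γ, w x = 1 := by
    rw [hw_def]
    rw [← ENNReal.ofReal_sum_of_nonneg (fun x _ => hw_nonneg x), hw_sum, ENNReal.ofReal_one]
  refine ⟨ν, ?_, ?_, ?_⟩
  · constructor
    rw [hν_def, Measure.coe_finset_sum, Finset.sum_apply]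
    calc ∑ x : ↥Γ, (w x • Measure.dirac (x : Ed d)) univ
        = ∑ x : ↥Γ, w x := by
          refine Finset.sum_congr rfl fun x _ => ?_
          simp [Measure.smul_apply]
      _ = 1 := hsum_w
  · rw [hν_def, Measure.coe_finset_sum, Finset.sum_apply]
    refine Finset.sum_eq_zero fun x _ => ?_
    have hx : (x : Ed d) ∉ ((Γ : Set (Ed d)))ᶜ := fun h => h x.2
    simp [Measure.smul_apply, Measure.dirac_apply, Set.indicator_of_notMem hx]
  · intro φ hφc hφμ hφν
    have hle : ∀ x : ↥Γ, (w x • Measure.dirac (x : Ed d)) ≤ ν := by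
      intro x
      rw [hν_def]
      refine Measure.le_iff.2 fun s hs => ?_
      rw [Measure.coe_finset_sum, Finset.sum_apply]
      exact Finset.single_le_sum
        (f := fun x : ↥Γ => (w x • Measure.dirac (x : Ed d)) s)
        (fun i _ => zero_le) (Finset.mem_univ x)
    have hint : ∀ x ∈ (Finset.univ : Finset ↥Γ),
        Integrable φ (w x • Measure.dirac (x : Ed d)) :=
      fun x _ => hφν.mono_measure (hle x)
    have hi : ∫ y, φ y ∂ν = ∑ x : ↥Γ, (a x / A) * φ (x : Ed d) := by
      rw [hν_def, integral_finset_sum_measure hint]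
      refine Finset.sum_congr rfl fun x _ => ?_
      rw [integral_smul_measure, integral_dirac, hw_def, smul_eq_mul,
        ENNReal.toReal_ofReal (hw_nonneg x)]
    rw [hi]
    exact hkey φ hφc hφμ
end
end

section
/- Let μ be a compactly supported probability measure on ℝ^d with the measurability/splitting structure of dual quantization, p ≥ 1, and N ≥ d+1. Then the L^p dual quantization error satisfies d_{p,N}(μ)^p = inf over ν ∈ P_{≥μ}(ℝ^d,N) of M_p^p(μ,ν), the infimum over measures supported on at most N points dominating μ in the convex order of the minimal p-th moment martingale transport cost. -/
open MeasureTheory Set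

noncomputable section

variable {E : Type*} [NormedAddCommGroup E] [NormedSpace ℝ E] [MeasurableSpace E] [BorelSpace E]

/-- the part of the first marginal of `π` lying above `y`. -/
def mpart (π : Measure (E × E)) (y : E) : Measure E :=
  (π.restrict (univ ×ˢ {y})).map Prod.fst

lemma mpart_apply (π : Measure (E × E)) (y : E) {A : Set E} (hA : MeasurableSet A) :
    mpart π y A = π (A ×ˢ {y}) := by
  rw [mpart, Measure.map_apply measurable_fst hA, Measure.restrict_apply (measurable_fst hA)]
  congr 1
  ext ⟨a, b⟩
  simp only [Set.mem_inter_iff, Set.mem_preimage, Set.mem_prod, Set.mem_univ, Set.mem_singleton_iff,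
    true_and, and_comm]

instance mpart_finite (π : Measure (E × E)) [IsFiniteMeasure π] (y : E) :
    IsFiniteMeasure (mpart π y) := by
  constructor
  rw [mpart_apply π y MeasurableSet.univ]
  exact measure_lt_top _ _

lemma mpart_le (π : Measure (E × E)) (y : E) {μ : Measure E} (hfst : π.map Prod.fst = μ) :
    mpart π y ≤ μ := by
  refine Measure.le_intro fun A hA _ => ?_
  rw [mpart_apply π y hA, ← hfst, Measure.map_apply measurable_fst hA]
  exact measure_mono (by intro q hq; exact hq.1)

lemma mpart_ac (π : Measure (E × E)) (y : E) {μ : Measure E} (hfst : π.map Prod.fst = μ) :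
    mpart π y ≪ μ :=
  Measure.absolutelyContinuous_of_le (mpart_le π y hfst)

set_option linter.unusedSectionVars false

variable [MeasurableSingletonClass E] [CompleteSpace E] [SecondCountableTopology E]

lemma prod_finset_eq_biUnion (A : Set E) (s : Finset E) :
    A ×ˢ (↑s : Set E) = ⋃ y ∈ s, A ×ˢ ({y} : Set E) := by
  ext ⟨a, b⟩
  constructor
  · rintro ⟨ha, hb⟩
    exact Set.mem_biUnion hb ⟨ha, rfl⟩
  · rintro h
    simp only [Set.mem_iUnion] at h
    obtain ⟨y, hy, ha, hb⟩ := h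
    exact ⟨ha, hb ▸ hy⟩

lemma sum_mpart_apply (π : Measure (E × E)) (s : Finset E)
    (hnull : π (univ ×ˢ (↑s : Set E)ᶜ) = 0) {μ : Measure E} (hfst : π.map Prod.fst = μ)
    {A : Set E} (hA : MeasurableSet A) :
    ∑ y ∈ s, mpart π y A = μ A := by
  have h1 : π (A ×ˢ (↑s : Set E)) = ∑ y ∈ s, π (A ×ˢ ({y} : Set E)) := by
    rw [prod_finset_eq_biUnion A s]
    refine measure_biUnion_finset ?_ fun y _ => hA.prod (measurableSet_singleton y)
    intro y hy z hz hyz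
    simp only [Function.onFun]
    apply Set.disjoint_left.2
    rintro ⟨a, b⟩ hab hab'
    exact hyz (hab.2.symm.trans hab'.2)
  have h2 : π (A ×ˢ (univ : Set E)) = π (A ×ˢ (↑s : Set E)) := by
    have : A ×ˢ (univ : Set E) = A ×ˢ (↑s : Set E) ∪ A ×ˢ (↑s : Set E)ᶜ := by
      ext ⟨a, b⟩; by_cases hb : b ∈ (↑s : Set E) <;> simp [hb]
    have hz : π (A ×ˢ (↑s : Set E)ᶜ) = 0 :=
      le_antisymm (le_trans (measure_mono fun q (hq : q ∈ A ×ˢ (↑s : Set E)ᶜ) =>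
        (⟨trivial, hq.2⟩ : q ∈ univ ×ˢ (↑s : Set E)ᶜ)) hnull.le) zero_le
    refine le_antisymm ?_ (measure_mono fun q hq => ⟨hq.1, trivial⟩)
    rw [this]
    refine le_trans (measure_union_le _ _) ?_
    rw [hz, add_zero]
  have h3 : μ A = π (A ×ˢ (univ : Set E)) := by
    rw [← hfst, Measure.map_apply measurable_fst hA]
    congr 1; ext ⟨a, b⟩; simp
  rw [h3, h2, h1]
  exact Finset.sum_congr rfl fun y _ => mpart_apply π y hA

/-- The conditional weight of `y` given `x`. -/
def wgt (π : Measure (E × E)) (μ : Measure E) (y : E) (x : E) : ℝ :=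
  ((mpart π y).rnDeriv μ x).toReal

lemma wgt_meas (π : Measure (E × E)) (μ : Measure E) (y : E) : Measurable (wgt π μ y) :=
  (Measure.measurable_rnDeriv _ _).ennreal_toReal

lemma wgt_nonneg (π : Measure (E × E)) (μ : Measure E) (y : E) (x : E) : 0 ≤ wgt π μ y x :=
  ENNReal.toReal_nonneg

lemma setIntegral_wgt (π : Measure (E × E)) [IsFiniteMeasure π] {μ : Measure E}
    [IsFiniteMeasure μ] (hfst : π.map Prod.fst = μ) (y : E) (A : Set E) :
    ∫ x in A, wgt π μ y x ∂μ = (mpart π y A).toReal :=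
  Measure.setIntegral_toReal_rnDeriv (mpart_ac π y hfst) A

lemma integrable_wgt (π : Measure (E × E)) [IsFiniteMeasure π] (μ : Measure E) (y : E) :
    Integrable (wgt π μ y) μ := by
  rw [← integrableOn_univ]
  exact Measure.integrableOn_toReal_rnDeriv (measure_ne_top _ _)

lemma sum_wgt_ae (π : Measure (E × E)) [IsFiniteMeasure π] {μ : Measure E} [IsFiniteMeasure μ]
    (s : Finset E) (hnull : π (univ ×ˢ (↑s : Set E)ᶜ) = 0) (hfst : π.map Prod.fst = μ) :
    (fun x => ∑ y ∈ s, wgt π μ y x) =ᵐ[μ] fun _ => (1 : ℝ) := by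
  refine ae_eq_of_forall_setIntegral_eq_of_sigmaFinite (fun A hA hAfin => ?_)
    (fun A hA hAfin => ?_) (fun A hA hAfin => ?_)
  · exact (integrable_finset_sum s fun y _ => integrable_wgt π μ y).integrableOn
  · exact (integrable_const 1).integrableOn
  · rw [integral_finset_sum s fun y _ => (integrable_wgt π μ y).integrableOn]
    rw [setIntegral_const, smul_eq_mul, mul_one, Measure.real]
    have : ∀ y ∈ s, ∫ x in A, wgt π μ y x ∂μ = (mpart π y A).toReal :=
      fun y _ => setIntegral_wgt π hfst y A
    rw [Finset.sum_congr rfl this, ← ENNReal.toReal_sum (fun y _ => measure_ne_top _ _),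
      sum_mpart_apply π s hnull hfst hA]

lemma prod_univ_ae_eq (π : Measure (E × E)) (s : Finset E)
    (hnull : π (univ ×ˢ (↑s : Set E)ᶜ) = 0) (A : Set E) :
    (A ×ˢ (univ : Set E)) =ᵐ[π] (A ×ˢ (↑s : Set E)) := by
  rw [ae_eq_set]
  constructor
  · refine le_antisymm (le_trans (measure_mono ?_) hnull.le) zero_le
    rintro ⟨a, b⟩ ⟨⟨ha, -⟩, hab⟩
    exact ⟨trivial, fun hb => hab ⟨ha, hb⟩⟩
  · have : (A ×ˢ (↑s : Set E)) \ (A ×ˢ (univ : Set E)) = ∅ := by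
      rw [Set.diff_eq_empty]
      rintro ⟨a, b⟩ ⟨ha, hb⟩
      exact ⟨ha, trivial⟩
    rw [this]
    exact measure_empty

lemma setIntegral_prod_univ_eq_sum {F : Type*} [NormedAddCommGroup F] [NormedSpace ℝ F]
    (π : Measure (E × E)) (s : Finset E) (hnull : π (univ ×ˢ (↑s : Set E)ᶜ) = 0)
    {g : E × E → F} (hg : Integrable g π) {A : Set E} (hA : MeasurableSet A) :
    ∫ q in A ×ˢ (univ : Set E), g q ∂π = ∑ y ∈ s, ∫ q in A ×ˢ ({y} : Set E), g q ∂π := by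
  rw [setIntegral_congr_set (prod_univ_ae_eq π s hnull A), prod_finset_eq_biUnion A s]
  refine integral_biUnion_finset s (fun y _ => hA.prod (measurableSet_singleton y)) ?_
    (fun y _ => hg.integrableOn)
  intro y hy z hz hyz
  apply Set.disjoint_left.2
  rintro ⟨a, b⟩ hab hab'
  exact hyz (hab.2.symm.trans hab'.2)

lemma setIntegral_snd_eq_sum (π : Measure (E × E)) [IsFiniteMeasure π] (s : Finset E)
    (hnull : π (univ ×ˢ (↑s : Set E)ᶜ) = 0)
    (hg : Integrable (fun q : E × E => q.2) π) {A : Set E} (hA : MeasurableSet A) :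
    ∫ q in A ×ˢ (univ : Set E), q.2 ∂π = ∑ y ∈ s, (π (A ×ˢ ({y} : Set E))).toReal • y := by
  rw [setIntegral_prod_univ_eq_sum π s hnull hg hA]
  refine Finset.sum_congr rfl fun y _ => ?_
  rw [setIntegral_congr_fun (hA.prod (measurableSet_singleton y))
    (fun q hq => (show q.2 = y from hq.2) : EqOn (fun q : E × E => q.2) (fun _ => y) _),
    setIntegral_const, Measure.real]

lemma ae_snd_mem (π : Measure (E × E)) (s : Finset E)
    (hnull : π (univ ×ˢ (↑s : Set E)ᶜ) = 0) : ∀ᵐ q ∂π, q.2 ∈ (↑s : Set E) := by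
  rw [ae_iff]
  have : {q : E × E | ¬ q.2 ∈ (↑s : Set E)} = univ ×ˢ (↑s : Set E)ᶜ := by
    ext ⟨a, b⟩; simp
  rw [this]; exact hnull

lemma integrable_snd_of_finset (π : Measure (E × E)) [IsFiniteMeasure π] (s : Finset E)
    (hnull : π (univ ×ˢ (↑s : Set E)ᶜ) = 0) : Integrable (fun q : E × E => q.2) π := by
  refine (integrable_const (∑ y ∈ s, ‖y‖)).mono'
    measurable_snd.aestronglyMeasurable ?_
  filter_upwards [ae_snd_mem π s hnull] with q hq
  exact Finset.single_le_sum (fun y _ => norm_nonneg y) hq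

lemma fst_preimage (A : Set E) : Prod.fst ⁻¹' A = A ×ˢ (univ : Set E) := by
  ext ⟨a, b⟩; simp

lemma integrable_id_of_fst {π : Measure (E × E)} {μ : Measure E}
    (hfst : π.map Prod.fst = μ) (hI1 : Integrable (fun q : E × E => q.1) π) :
    Integrable (fun x : E => x) μ := by
  rw [← hfst]
  exact (integrable_map_measure (f := Prod.fst) (g := fun x : E => x)
    measurable_id.aestronglyMeasurable measurable_fst.aemeasurable).2 hI1

lemma barycenter_ae (π : Measure (E × E)) [IsFiniteMeasure π] {μ : Measure E}
    [IsFiniteMeasure μ] (hfst : π.map Prod.fst = μ) (s : Finset E)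
    (hnull : π (univ ×ˢ (↑s : Set E)ᶜ) = 0)
    (hmart : ∀ A : Set E, MeasurableSet A →
      ∫ q in A ×ˢ (univ : Set E), (q.2 - q.1) ∂π = 0)
    (hI1 : Integrable (fun q : E × E => q.1) π) :
    (fun x => ∑ y ∈ s, wgt π μ y x • y) =ᵐ[μ] fun x => x := by
  have hI2 : Integrable (fun q : E × E => q.2) π := integrable_snd_of_finset π s hnull
  refine ae_eq_of_forall_setIntegral_eq_of_sigmaFinite (fun A hA _ => ?_) (fun A hA _ => ?_)
    (fun A hA _ => ?_)
  · exact (integrable_finset_sum s fun y _ =>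
      (integrable_wgt π μ y).smul_const y).integrableOn
  · exact (integrable_id_of_fst hfst hI1).integrableOn
  · rw [integral_finset_sum s fun y _ => ((integrable_wgt π μ y).smul_const y).integrableOn]
    have h1 : ∀ y ∈ s, ∫ x in A, wgt π μ y x • y ∂μ = (π (A ×ˢ ({y} : Set E))).toReal • y := by
      intro y _
      rw [integral_smul_const, setIntegral_wgt π hfst y A, mpart_apply π y hA]
    rw [Finset.sum_congr rfl h1, ← setIntegral_snd_eq_sum π s hnull hI2 hA]
    have h2 : ∫ q in A ×ˢ (univ : Set E), q.2 ∂π = ∫ q in A ×ˢ (univ : Set E), q.1 ∂π := by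
      have h3 := hmart A hA
      rw [integral_sub hI2.integrableOn hI1.integrableOn, sub_eq_zero] at h3
      exact h3
    have h4 := setIntegral_map (μ := π) (g := Prod.fst) (f := fun x : E => x) hA
      measurable_id.aestronglyMeasurable measurable_fst.aemeasurable
    rw [h2, ← hfst, h4, fst_preimage]

lemma snd_singleton_eq (π : Measure (E × E)) {ν : Measure E} (hsnd : π.map Prod.snd = ν)
    (y : E) : ν {y} = mpart π y univ := by
  rw [← hsnd, Measure.map_apply measurable_snd (measurableSet_singleton y),
    mpart_apply π y MeasurableSet.univ]
  congr 1
  ext ⟨a, b⟩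
  simp [eq_comm]

lemma nullc_of_snd {π : Measure (E × E)} {ν : Measure E} (hsnd : π.map Prod.snd = ν)
    {s : Finset E} (hν : ν ((↑s : Set E)ᶜ) = 0) : π (univ ×ˢ (↑s : Set E)ᶜ) = 0 := by
  rw [← hsnd, Measure.map_apply measurable_snd s.finite_toSet.measurableSet.compl] at hν
  · rw [← hν]; congr 1; ext ⟨a, b⟩; simp
  
lemma convexOrder_of_mart (π : Measure (E × E)) [IsProbabilityMeasure π] {μ ν : Measure E}
    [IsFiniteMeasure μ] (hfst : π.map Prod.fst = μ) (hsnd : π.map Prod.snd = ν)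
    (s : Finset E) (hν : ν ((↑s : Set E)ᶜ) = 0)
    (hmart : ∀ A : Set E, MeasurableSet A →
      ∫ q in A ×ˢ (univ : Set E), (q.2 - q.1) ∂π = 0)
    (hI1 : Integrable (fun q : E × E => q.1) π) :
    ConvexOrder μ ν := by
  intro φ hφ hφμ hφν
  have hnull : π (univ ×ˢ (↑s : Set E)ᶜ) = 0 := nullc_of_snd hsnd hν
  have hsum := sum_wgt_ae π s hnull hfst
  have hbar := barycenter_ae π hfst s hnull hmart hI1
  have hφbar : (fun x => φ (∑ y ∈ s, wgt π μ y x • y)) =ᵐ[μ] φ :=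
    hbar.mono fun x hx => by simp only [hx]
  have e1 : ∫ x, φ x ∂μ = ∫ x, φ (∑ y ∈ s, wgt π μ y x • y) ∂μ :=
    (integral_congr_ae hφbar).symm
  have hint1 : Integrable (fun x => φ (∑ y ∈ s, wgt π μ y x • y)) μ := hφμ.congr hφbar.symm
  have hint2 : Integrable (fun x => ∑ y ∈ s, wgt π μ y x * φ y) μ :=
    integrable_finset_sum s fun y _ => (integrable_wgt π μ y).mul_const (φ y)
  have e2 : ∫ x, φ (∑ y ∈ s, wgt π μ y x • y) ∂μ ≤ ∫ x, ∑ y ∈ s, wgt π μ y x * φ y ∂μ := by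
    refine integral_mono_ae hint1 hint2 ?_
    filter_upwards [hsum] with x hx
    exact hφ.map_sum_le (fun y _ => wgt_nonneg π μ y x) hx (fun y _ => mem_univ _)
  have e3 : ∫ x, ∑ y ∈ s, wgt π μ y x * φ y ∂μ = ∑ y ∈ s, (ν {y}).toReal * φ y := by
    rw [integral_finset_sum s fun y _ => (integrable_wgt π μ y).mul_const (φ y)]
    refine Finset.sum_congr rfl fun y _ => ?_
    rw [integral_mul_const]
    congr 1
    rw [← setIntegral_univ (f := wgt π μ y), setIntegral_wgt π hfst y univ,
      snd_singleton_eq π hsnd y]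
  have e4 : ∫ x, φ x ∂ν = ∑ y ∈ s, (ν {y}).toReal * φ y := by
    have huniv : (univ : Set E) =ᵐ[ν] (↑s : Set E) := by
      rw [ae_eq_set]
      constructor
      · rw [show (univ : Set E) \ (↑s : Set E) = (↑s : Set E)ᶜ by ext; simp]; exact hν
      · rw [Set.diff_eq_empty.mpr (subset_univ _)]; exact measure_empty
    rw [← setIntegral_univ (f := φ), setIntegral_congr_set huniv,
      integral_finset s hφν.integrableOn]
    exact Finset.sum_congr rfl fun y _ => smul_eq_mul _ _
  rw [e1, e4]
  exact le_of_le_of_eq e2 e3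


lemma initial_segment (t : Finset ℕ)
    (hdc : ∀ a b : ℕ, a ≤ b → b ∈ t → a ∈ t) : ∀ j, j ∈ t ↔ j < t.card := by
  intro j
  constructor
  · intro hj
    have hsub : Finset.range (j + 1) ⊆ t := fun a ha =>
      hdc a j (Nat.lt_succ_iff.1 (Finset.mem_range.1 ha)) hj
    have h2 := Finset.card_le_card hsub
    rwa [Finset.card_range] at h2
  · intro hj
    by_contra hjt
    have hsub : t ⊆ Finset.range j := fun b hb =>
      Finset.mem_range.2 (lt_of_not_ge fun h => hjt (hdc j b h hb))
    have h2 := Finset.card_le_card hsub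
    rw [Finset.card_range] at h2
    omega

/-- cut-off weight sequence -/
def transV (π : Measure (E × E)) (μ : Measure E) (e : ℕ → E) (k n : ℕ) (x : E) : ℝ :=
  if n < k then wgt π μ (e n) x else 0

/-- cumulative weights -/
def transW (π : Measure (E × E)) (μ : Measure E) (e : ℕ → E) (k n : ℕ) (x : E) : ℝ :=
  ∑ j ∈ Finset.range n, transV π μ e k j x

/-- index selection function -/
def transF (π : Measure (E × E)) (μ : Measure E) (e : ℕ → E) (k : ℕ) (x : E) (u : ℝ) : ℕ :=
  ((Finset.range (k - 1)).filter fun i => transW π μ e k (i + 1) x ≤ u).card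

variable (π : Measure (E × E)) (μ : Measure E) (e : ℕ → E) (k : ℕ)

lemma transV_nonneg (n : ℕ) (x : E) : 0 ≤ transV π μ e k n x := by
  unfold transV
  split
  · exact wgt_nonneg π μ _ x
  · exact le_refl 0

lemma transV_meas (n : ℕ) : Measurable (transV π μ e k n) := by
  unfold transV
  by_cases h : n < k
  · simpa [h] using wgt_meas π μ (e n)
  · simpa [h] using measurable_const

lemma transW_meas (n : ℕ) : Measurable (transW π μ e k n) := by
  unfold transW
  exact Finset.measurable_sum _ fun j _ => transV_meas π μ e k j

lemma transW_mono (x : E) : Monotone fun n => transW π μ e k n x := by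
  intro m n hmn
  exact Finset.sum_le_sum_of_subset_of_nonneg (Finset.range_subset_range.2 hmn)
    fun j _ _ => transV_nonneg π μ e k j x

lemma transW_nonneg (n : ℕ) (x : E) : 0 ≤ transW π μ e k n x :=
  Finset.sum_nonneg fun j _ => transV_nonneg π μ e k j x

lemma transW_zero (x : E) : transW π μ e k 0 x = 0 := by simp [transW]

lemma transW_succ_sub (n : ℕ) (x : E) :
    transW π μ e k (n + 1) x - transW π μ e k n x = transV π μ e k n x := by
  unfold transW
  rw [Finset.sum_range_succ]
  ring

lemma transF_le (x : E) (u : ℝ) : transF π μ e k x u ≤ k - 1 :=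
  le_trans (Finset.card_filter_le _ _) (le_of_eq (Finset.card_range _))

lemma transF_filter (x : E) (u : ℝ) :
    (Finset.range (k - 1)).filter (fun i => transW π μ e k (i + 1) x ≤ u) =
      Finset.range (transF π μ e k x u) := by
  have hdc : ∀ a b : ℕ, a ≤ b →
      b ∈ (Finset.range (k - 1)).filter (fun i => transW π μ e k (i + 1) x ≤ u) →
      a ∈ (Finset.range (k - 1)).filter (fun i => transW π μ e k (i + 1) x ≤ u) := by
    intro a b hab hb
    rw [Finset.mem_filter, Finset.mem_range] at hb ⊢
    exact ⟨lt_of_le_of_lt hab hb.1,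
      le_trans (transW_mono π μ e k x (by omega : a + 1 ≤ b + 1)) hb.2⟩
  ext j
  rw [Finset.mem_range]
  exact initial_segment _ hdc j

lemma transF_lt_iff (x : E) (u : ℝ) {i : ℕ} (hi : i < k - 1) :
    i < transF π μ e k x u ↔ transW π μ e k (i + 1) x ≤ u := by
  rw [← Finset.mem_range, ← transF_filter, Finset.mem_filter, Finset.mem_range]
  exact ⟨fun h => h.2, fun h => ⟨hi, h⟩⟩

lemma transF_spec (x : E) (u : ℝ) {i : ℕ} (hik : i < k) :
    transF π μ e k x u = i ↔
      ((i = 0 ∨ transW π μ e k i x ≤ u) ∧ (i = k - 1 ∨ u < transW π μ e k (i + 1) x)) := by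
  constructor
  · rintro rfl
    refine ⟨?_, ?_⟩
    · rcases Nat.eq_zero_or_pos (transF π μ e k x u) with h | h
      · exact Or.inl h
      · right
        have h1 : transF π μ e k x u - 1 < k - 1 := by
          have := transF_le π μ e k x u
          omega
        have h2 := (transF_lt_iff π μ e k x u h1).1 (by omega)
        rwa [Nat.sub_add_cancel h] at h2
    · by_cases h : transF π μ e k x u = k - 1
      · exact Or.inl h
      · right
        have h1 : transF π μ e k x u < k - 1 := lt_of_le_of_ne (transF_le π μ e k x u) h
        by_contra hcon
        push_neg at hcon
        have := (transF_lt_iff π μ e k x u h1).2 hcon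
        omega
  · rintro ⟨h1, h2⟩
    have hle : transF π μ e k x u ≤ i := by
      rcases lt_or_ge i (k - 1) with hik1 | hik1
      · by_contra hc
        push_neg at hc
        have h3 := (transF_lt_iff π μ e k x u hik1).1 hc
        rcases h2 with h2 | h2
        · omega
        · exact absurd h3 (not_le.2 h2)
      · exact le_trans (transF_le π μ e k x u) hik1
    have hge : i ≤ transF π μ e k x u := by
      rcases Nat.eq_zero_or_pos i with rfl | hipos
      · exact Nat.zero_le _
      · rcases h1 with h1 | h1
        · omega
        · have h3 : i - 1 < k - 1 := by omega
          have h4 := (transF_lt_iff π μ e k x u h3).2 (by rwa [Nat.sub_add_cancel hipos])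
          omega
    omega

lemma vol_transF (hk : 0 < k) (x : E) (h1 : transW π μ e k k x = 1) {i : ℕ} (hik : i < k) :
    (volume.restrict (Icc (0:ℝ) 1)) {u : ℝ | transF π μ e k x u = i} =
      ENNReal.ofReal (transW π μ e k (i + 1) x - transW π μ e k i x) := by
  have hset : {u : ℝ | transF π μ e k x u = i} =
      {u : ℝ | (i = 0 ∨ transW π μ e k i x ≤ u) ∧ (i = k - 1 ∨ u < transW π μ e k (i + 1) x)} := by
    ext u
    exact transF_spec π μ e k x u hik
  have ha0 : 0 ≤ transW π μ e k i x := transW_nonneg π μ e k i x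
  have hab : transW π μ e k i x ≤ transW π μ e k (i + 1) x :=
    transW_mono π μ e k x (Nat.le_succ i)
  have hb1 : transW π μ e k (i + 1) x ≤ 1 := h1 ▸ transW_mono π μ e k x hik
  rw [hset, Measure.restrict_apply' measurableSet_Icc]
  by_cases hi0 : i = 0 <;> by_cases hik1 : i = k - 1
  · -- i = 0 = k - 1 : whole interval
    subst hi0
    have hik2 : 1 = k := by omega
    have : {u : ℝ | ((0:ℕ) = 0 ∨ transW π μ e k 0 x ≤ u) ∧
        ((0:ℕ) = k - 1 ∨ u < transW π μ e k (0 + 1) x)} = univ := by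
      ext u
      simp [hik1]
    rw [this, Set.univ_inter, Real.volume_Icc, transW_zero,
      show (0:ℕ) + 1 = k from by omega, h1, sub_zero]
  · -- i = 0 < k - 1
    subst hi0
    have : {u : ℝ | ((0:ℕ) = 0 ∨ transW π μ e k 0 x ≤ u) ∧
        ((0:ℕ) = k - 1 ∨ u < transW π μ e k (0 + 1) x)} ∩ Icc (0:ℝ) 1 =
        Ico 0 (transW π μ e k (0 + 1) x) := by
      ext u
      simp only [Set.mem_inter_iff, Set.mem_setOf_eq, Set.mem_Icc, Set.mem_Ico]
      constructor
      · rintro ⟨⟨-, hlt⟩, h0u, hu1⟩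
        rcases hlt with h | h
        · exact absurd h hik1
        · exact ⟨h0u, h⟩
      · rintro ⟨h0u, hub⟩
        exact ⟨⟨Or.inl (by trivial), Or.inr hub⟩, h0u, le_trans hub.le (by simpa using hb1)⟩
    rw [this, Real.volume_Ico, transW_zero, sub_zero]
  · -- 0 < i = k - 1
    have hi1k : i + 1 = k := by omega
    have : {u : ℝ | (i = 0 ∨ transW π μ e k i x ≤ u) ∧
        (i = k - 1 ∨ u < transW π μ e k (i + 1) x)} ∩ Icc (0:ℝ) 1 =
        Icc (transW π μ e k i x) 1 := by
      ext u
      simp only [Set.mem_inter_iff, Set.mem_setOf_eq, Set.mem_Icc]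
      constructor
      · rintro ⟨⟨hau, -⟩, h0u, hu1⟩
        rcases hau with h | h
        · exact absurd h hi0
        · exact ⟨h, hu1⟩
      · rintro ⟨hau, hu1⟩
        exact ⟨⟨Or.inr hau, Or.inl hik1⟩, le_trans ha0 hau, hu1⟩
    rw [this, Real.volume_Icc, hi1k, h1]
  · -- 0 < i < k - 1
    have : {u : ℝ | (i = 0 ∨ transW π μ e k i x ≤ u) ∧
        (i = k - 1 ∨ u < transW π μ e k (i + 1) x)} ∩ Icc (0:ℝ) 1 =
        Ico (transW π μ e k i x) (transW π μ e k (i + 1) x) := by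
      ext u
      simp only [Set.mem_inter_iff, Set.mem_setOf_eq, Set.mem_Icc, Set.mem_Ico]
      constructor
      · rintro ⟨⟨hau, hub⟩, h0u, hu1⟩
        rcases hau with h | h
        · exact absurd h hi0
        rcases hub with h' | h'
        · exact absurd h' hik1
        · exact ⟨h, h'⟩
      · rintro ⟨hau, hub⟩
        exact ⟨⟨Or.inr hau, Or.inr hub⟩, le_trans ha0 hau, le_trans hub.le hb1⟩
    rw [this, Real.volume_Ico]


instance : IsProbabilityMeasure (volume.restrict (Icc (0:ℝ) 1)) :=
  ⟨by simp [Real.volume_Icc]⟩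

lemma exists_transfer {Ω : Type} [MeasurableSpace Ω] (P : Measure Ω) [IsProbabilityMeasure P]
    (X : Ω → E) (hX : Measurable X)
    (π : Measure (E × E)) [IsProbabilityMeasure π]
    (hfst : π.map Prod.fst = P.map X)
    (s : Finset E) (hnull : π (univ ×ˢ (↑s : Set E)ᶜ) = 0) :
    ∃ Y : Ω × ℝ → E, Measurable Y ∧ Set.range Y ⊆ (↑s : Set E) ∧
      (P.prod (volume.restrict (Icc (0:ℝ) 1))).map (fun q => (X q.1, Y q)) = π := by
  haveI : IsProbabilityMeasure (P.map X) := Measure.isProbabilityMeasure_map hX.aemeasurable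
  set μ : Measure E := P.map X with hμdef
  set lam : Measure ℝ := volume.restrict (Icc (0:ℝ) 1) with hlamdef
  have hsne : s.Nonempty := by
    rw [Finset.nonempty_iff_ne_empty]
    rintro rfl
    simp only [Finset.coe_empty, Set.compl_empty, Set.prod_univ, Set.preimage_univ,
      measure_univ] at hnull
    exact one_ne_zero hnull
  set k : ℕ := s.card with hkdef
  have hk : 0 < k := Finset.card_pos.2 hsne
  set e : ℕ → E := fun n => if h : n < k then ((s.equivFin.symm ⟨n, h⟩ : s) : E)
    else (hsne.choose : E) with hedef
  have he_mem : ∀ n, e n ∈ s := by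
    intro n
    by_cases h : n < k
    · simp only [hedef, dif_pos h]
      exact Subtype.coe_prop _
    · simp only [hedef, dif_neg h]
      exact hsne.choose_spec
  have he_inj : ∀ m, m < k → ∀ n, n < k → e m = e n → m = n := by
    intro m hm n hn hmn
    rw [hedef] at hmn
    simp only [dif_pos hm, dif_pos hn] at hmn
    have h2 := s.equivFin.symm.injective (Subtype.coe_injective hmn)
    exact congrArg Fin.val h2
  have he_surj : ∀ y ∈ s, ∃ n, n < k ∧ e n = y := by
    intro y hy
    refine ⟨(s.equivFin ⟨y, hy⟩ : Fin k).val, (s.equivFin ⟨y, hy⟩ : Fin k).isLt, ?_⟩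
    rw [hedef]
    simp only [dif_pos (s.equivFin ⟨y, hy⟩ : Fin k).isLt]
    have : (⟨(s.equivFin ⟨y, hy⟩ : Fin k).val, (s.equivFin ⟨y, hy⟩ : Fin k).isLt⟩ : Fin k)
        = s.equivFin ⟨y, hy⟩ := by
      apply Fin.ext
      rfl
    exact (dif_pos (s.equivFin ⟨y, hy⟩ : Fin k).isLt).trans (by rw [this, Equiv.symm_apply_apply])
  -- the transfer map
  set f : Ω × ℝ → ℕ := fun q => transF π μ e k (X q.1) q.2 with hfdef
  set Y : Ω × ℝ → E := fun q => e (f q) with hYdef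
  have hfmeas : Measurable f := by
    rw [hfdef]
    simp only [transF, Finset.card_filter]
    refine Finset.measurable_sum _ fun i _ => ?_
    refine Measurable.ite ?_ measurable_const measurable_const
    exact measurableSet_le ((transW_meas π μ e k (i + 1)).comp (hX.comp measurable_fst))
      measurable_snd
  have hYmeas : Measurable Y := by
    rw [hYdef]
    exact Measurable.comp (measurable_from_nat (f := e)) hfmeas
  refine ⟨Y, hYmeas, fun z hz => ?_, ?_⟩
  · obtain ⟨q, rfl⟩ := hz
    exact he_mem (f q)
  -- the sum of the weights is one
  have hW1 : ∀ᵐ x ∂μ, transW π μ e k k x = 1 := by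
    filter_upwards [sum_wgt_ae π s hnull hfst] with x hx
    have hx' : ∑ y ∈ s, wgt π μ y x = 1 := hx
    rw [transW, ← hx']
    refine Finset.sum_bij (fun n _ => e n) (fun n _ => he_mem n) ?_ ?_ ?_
    · intro m hm n hn hmn
      exact he_inj m (Finset.mem_range.1 hm) n (Finset.mem_range.1 hn) hmn
    · intro y hy
      obtain ⟨n, hn, rfl⟩ := he_surj y hy
      exact ⟨n, Finset.mem_range.2 hn, rfl⟩
    · intro n hn
      rw [Finset.mem_range] at hn
      simp only [transV, if_pos hn]
  -- the key measure computation
  have key : ∀ A : Set E, MeasurableSet A → ∀ i : ℕ, i < k →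
      (P.prod lam) ((fun q : Ω × ℝ => X q.1) ⁻¹' A ∩ {q | f q = i}) = mpart π (e i) A := by
    intro A hA i hik
    have hFset : MeasurableSet {q : Ω × ℝ | f q = i} := hfmeas (measurableSet_singleton i)
    have hC : MeasurableSet ((fun q : Ω × ℝ => X q.1) ⁻¹' A ∩ {q | f q = i}) :=
      ((hX.comp measurable_fst) hA).inter hFset
    rw [Measure.prod_apply hC]
    have hW1P : ∀ᵐ ω ∂P, transW π μ e k k (X ω) = 1 := by
      rw [hμdef] at hW1
      exact (ae_map_iff hX.aemeasurable
        ((transW_meas π μ e k k) (measurableSet_singleton 1))).1 hW1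
    have hsec : ∀ᵐ ω ∂P, lam (Prod.mk ω ⁻¹' ((fun q : Ω × ℝ => X q.1) ⁻¹' A ∩ {q | f q = i}))
        = A.indicator (fun x => ENNReal.ofReal (wgt π μ (e i) x)) (X ω) := by
      filter_upwards [hW1P] with ω hω
      by_cases hmem : X ω ∈ A
      · have hset : Prod.mk ω ⁻¹' ((fun q : Ω × ℝ => X q.1) ⁻¹' A ∩ {q | f q = i})
            = {u : ℝ | transF π μ e k (X ω) u = i} := by
          ext u
          simp [hfdef, hmem]
        rw [hset, vol_transF π μ e k hk (X ω) hω hik, Set.indicator_of_mem hmem,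
          transW_succ_sub, transV, if_pos hik]
      · have hset : Prod.mk ω ⁻¹' ((fun q : Ω × ℝ => X q.1) ⁻¹' A ∩ {q | f q = i}) = ∅ := by
          ext u
          simp [hmem]
        rw [hset, measure_empty, Set.indicator_of_notMem hmem]
    rw [lintegral_congr_ae hsec,
      ← lintegral_map (Measurable.indicator (Measurable.ennreal_ofReal (wgt_meas π μ (e i))) hA)
        hX, ← hμdef, lintegral_indicator hA]
    have heq : ∀ᵐ x ∂μ, ENNReal.ofReal (wgt π μ (e i) x) = (mpart π (e i)).rnDeriv μ x := by
      filter_upwards [Measure.rnDeriv_lt_top (mpart π (e i)) μ] with x hx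
      rw [wgt, ENNReal.ofReal_toReal hx.ne]
    calc ∫⁻ x in A, ENNReal.ofReal (wgt π μ (e i) x) ∂μ
        = ∫⁻ x in A, (mpart π (e i)).rnDeriv μ x ∂μ :=
          lintegral_congr_ae (ae_restrict_of_ae heq)
      _ = mpart π (e i) A := Measure.setLIntegral_rnDeriv (mpart_ac π (e i) hfst) A
  -- conclude: the law of `(X ∘ fst, Y)` is `π`
  have hpair : Measurable fun q : Ω × ℝ => (X q.1, Y q) :=
    (hX.comp measurable_fst).prodMk hYmeas
  refine Measure.ext fun B hB => ?_
  rw [Measure.map_apply hpair hB]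
  have hflt : ∀ q, f q < k := fun q =>
    lt_of_le_of_lt (transF_le π μ e k (X q.1) q.2) (by omega)
  set sect : ℕ → Set E := fun i => (fun x => (x, e i)) ⁻¹' B with hsectdef
  have hsectmeas : ∀ i, MeasurableSet (sect i) := fun i =>
    (measurable_id.prodMk measurable_const) hB
  have hdecomp : (fun q : Ω × ℝ => (X q.1, Y q)) ⁻¹' B =
      ⋃ i : Fin k, ((fun q : Ω × ℝ => X q.1) ⁻¹' sect i.val ∩ {q | f q = i.val}) := by
    ext q
    simp only [Set.mem_preimage, Set.mem_iUnion, Set.mem_inter_iff, Set.mem_setOf_eq]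
    constructor
    · intro hq
      refine ⟨⟨f q, hflt q⟩, ?_, rfl⟩
      rw [hsectdef]
      exact hq
    · rintro ⟨i, hmem, hfi⟩
      rw [hsectdef] at hmem
      have : Y q = e i.val := by rw [hYdef]; simp only [hfi]
      rw [this]
      exact hmem
  have hLHS : (P.prod lam) ((fun q : Ω × ℝ => (X q.1, Y q)) ⁻¹' B) =
      ∑ i : Fin k, mpart π (e i.val) (sect i.val) := by
    rw [hdecomp, measure_iUnion ?_ ?_, tsum_fintype]
    · exact Finset.sum_congr rfl fun i _ => key (sect i.val) (hsectmeas i.val) i.val i.isLt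
    · intro i j hij
      simp only [Function.onFun]
      apply Set.disjoint_left.2
      rintro q ⟨-, hqi⟩ ⟨-, hqj⟩
      exact hij (Fin.ext (hqi ▸ hqj : (i : ℕ) = (j : ℕ)).symm ▸ rfl)
    · exact fun i => ((hX.comp measurable_fst) (hsectmeas i.val)).inter
        (hfmeas (measurableSet_singleton i.val))
  have hRHS : π B = ∑ i : Fin k, mpart π (e i.val) (sect i.val) := by
    have hsmeas : MeasurableSet ((univ : Set E) ×ˢ (↑s : Set E)) :=
      MeasurableSet.univ.prod s.finite_toSet.measurableSet
    have h0 : π (B \ (univ ×ˢ (↑s : Set E))) = 0 := by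
      refine le_antisymm (le_trans (measure_mono ?_) hnull.le) zero_le
      rintro ⟨a, b⟩ ⟨-, hb⟩
      exact ⟨trivial, fun hbs => hb ⟨trivial, hbs⟩⟩
    have h1 : π B = π (B ∩ univ ×ˢ (↑s : Set E)) := by
      rw [← measure_inter_add_diff B hsmeas, h0, add_zero]
    have h2 : B ∩ univ ×ˢ (↑s : Set E) = ⋃ i : Fin k, sect i.val ×ˢ ({e i.val} : Set E) := by
      ext ⟨a, b⟩
      simp only [Set.mem_inter_iff, Set.mem_prod, Set.mem_univ, true_and, Set.mem_iUnion,
        Set.mem_singleton_iff, hsectdef, Set.mem_preimage]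
      constructor
      · rintro ⟨hab, hbs⟩
        obtain ⟨n, hn, rfl⟩ := he_surj b hbs
        exact ⟨⟨n, hn⟩, hab, rfl⟩
      · rintro ⟨i, hai, rfl⟩
        exact ⟨hai, he_mem i.val⟩
    rw [h1, h2, measure_iUnion ?_ ?_, tsum_fintype]
    · refine Finset.sum_congr rfl fun i _ => ?_
      rw [mpart_apply π (e i.val) (hsectmeas i.val)]
    · intro i j hij
      simp only [Function.onFun]
      apply Set.disjoint_left.2
      rintro ⟨a, b⟩ ⟨-, hbi⟩ ⟨-, hbj⟩
      exact hij (Fin.ext (he_inj i.val i.isLt j.val j.isLt (hbi ▸ hbj)))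
    · exact fun i => (hsectmeas i.val).prod (measurableSet_singleton _)
  rw [hLHS, hRHS]


theorem stmt9 (d N : ℕ) (hN : d + 1 ≤ N) (p : ℝ) (hp : 1 ≤ p)
    (Ω : Type) [MeasurableSpace Ω] (P : Measure Ω) [IsProbabilityMeasure P]
    (X : Ω → Ed d) (hX : Measurable X)
    (μ : Measure (Ed d)) (hμ : μ = P.map X)
    (hcomp : ∃ K : Set (Ed d), IsCompact K ∧ μ Kᶜ = 0) :
    sInf {c | ∃ Y : Ω × ℝ → Ed d, Measurable Y ∧
        (∃ s : Finset (Ed d), s.card ≤ N ∧ Set.range Y ⊆ (s : Set (Ed d))) ∧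
        (∀ A : Set (Ed d), MeasurableSet A →
          ∫ ω in (fun ω : Ω × ℝ => X ω.1) ⁻¹' A, (Y ω - X ω.1)
              ∂(P.prod (volume.restrict (Icc (0:ℝ) 1))) = 0) ∧
        c = ∫ ω, ‖X ω.1 - Y ω‖ ^ p ∂(P.prod (volume.restrict (Icc (0:ℝ) 1)))}
      = sInf {c | ∃ ν : Measure (Ed d), IsProbabilityMeasure ν ∧ SuppLE N ν ∧
          ConvexOrder μ ν ∧
          ∃ π : Measure (Ed d × Ed d), IsMartingaleCoupling π μ ν ∧ c = pCost p π} := by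
  subst hμ
  have hconstr : ∃ K : Set (Ed d), IsCompact K ∧ (P.map X) Kᶜ = 0 := hcomp
  refine congrArg sInf (Set.ext fun c => ⟨?_, ?_⟩)
  · -- from a dual quantizer to a martingale coupling
    rintro ⟨Y, hYm, ⟨s, hscard, hsrange⟩, hmart, hc⟩
    have hpairm : Measurable fun q : Ω × ℝ => (X q.1, Y q) :=
      (hX.comp measurable_fst).prodMk hYm
    set PL : Measure (Ω × ℝ) := P.prod (volume.restrict (Icc (0:ℝ) 1)) with hPLdef
    set π : Measure (Ed d × Ed d) := PL.map (fun q : Ω × ℝ => (X q.1, Y q)) with hπdef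
    haveI : IsProbabilityMeasure π := Measure.isProbabilityMeasure_map hpairm.aemeasurable
    have hfst : π.map Prod.fst = P.map X := by
      rw [hπdef, Measure.map_map measurable_fst hpairm,
        show (Prod.fst ∘ fun q : Ω × ℝ => (X q.1, Y q)) = X ∘ Prod.fst from rfl,
        ← Measure.map_map hX measurable_fst, Measure.map_fst_prod, measure_univ, one_smul]
    have hsnd : π.map Prod.snd = PL.map Y := by
      rw [hπdef, Measure.map_map measurable_snd hpairm]
      rfl
    have hsm : MeasurableSet ((↑s : Set (Ed d))ᶜ) := s.finite_toSet.measurableSet.compl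
    have hYnull : (PL.map Y) ((↑s : Set (Ed d))ᶜ) = 0 := by
      rw [Measure.map_apply hYm hsm]
      have : Y ⁻¹' (↑s : Set (Ed d))ᶜ = ∅ := by
        ext q
        simp only [Set.mem_preimage, Set.mem_compl_iff, Set.mem_empty_iff_false, iff_false,
          not_not]
        exact hsrange (Set.mem_range_self q)
      rw [this, measure_empty]
    have hnull : π ((univ : Set (Ed d)) ×ˢ (↑s : Set (Ed d))ᶜ) = 0 := nullc_of_snd hsnd hYnull
    have hmart' : ∀ A : Set (Ed d), MeasurableSet A →
        ∫ q in A ×ˢ (univ : Set (Ed d)), (q.2 - q.1) ∂π = 0 := by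
      intro A hA
      rw [hπdef, setIntegral_map (f := fun q : Ed d × Ed d => q.2 - q.1) (hA.prod MeasurableSet.univ)
        (continuous_snd.sub continuous_fst).aestronglyMeasurable hpairm.aemeasurable]
      have hpre : (fun q : Ω × ℝ => (X q.1, Y q)) ⁻¹' (A ×ˢ (univ : Set (Ed d)))
          = (fun q : Ω × ℝ => X q.1) ⁻¹' A := by
        ext q
        simp
      rw [hpre]
      exact hmart A hA
    have hI1 : Integrable (fun q : Ed d × Ed d => q.1) π := by
      obtain ⟨K, hK, hKnull⟩ := hconstr
      obtain ⟨r, hr⟩ := hK.isBounded.subset_closedBall 0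
      have haeK : ∀ᵐ q ∂π, q.1 ∈ K := by
        rw [ae_iff]
        have h1 : {q : Ed d × Ed d | ¬ q.1 ∈ K} = Prod.fst ⁻¹' Kᶜ := rfl
        rw [h1, ← Measure.map_apply measurable_fst hK.isClosed.measurableSet.compl, hfst]
        exact hKnull
      refine (integrable_const r).mono' measurable_fst.aestronglyMeasurable ?_
      filter_upwards [haeK] with q hq
      exact mem_closedBall_zero_iff.1 (hr hq)
    refine ⟨PL.map Y, Measure.isProbabilityMeasure_map hYm.aemeasurable, ⟨s, hscard, hYnull⟩,
      convexOrder_of_mart π hfst hsnd s hYnull hmart' hI1, π,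
      ⟨inferInstance, ⟨hfst, hsnd⟩, hmart'⟩, ?_⟩
    rw [hc, pCost, hπdef, integral_map hpairm.aemeasurable]
    · refine integral_congr_ae (Filter.Eventually.of_forall fun q => ?_)
      simp only [norm_sub_rev]
    · exact ((continuous_snd.sub continuous_fst).norm.rpow_const
        fun q => Or.inr (le_trans zero_le_one hp)).aestronglyMeasurable
  · -- from a martingale coupling to a dual quantizer
    rintro ⟨ν, hνp, ⟨s, hscard, hsnull⟩, hcvx, π, ⟨hπp, ⟨hfstπ, hsndπ⟩, hmartπ⟩, hc⟩
    haveI := hπp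
    have hnull : π ((univ : Set (Ed d)) ×ˢ (↑s : Set (Ed d))ᶜ) = 0 := by
      refine nullc_of_snd hsndπ ?_
      exact hsnull
    obtain ⟨Y, hYm, hYr, hlaw⟩ := exists_transfer P X hX π hfstπ s hnull
    have hpairm : Measurable fun q : Ω × ℝ => (X q.1, Y q) :=
      (hX.comp measurable_fst).prodMk hYm
    refine ⟨Y, hYm, ⟨s, hscard, hYr⟩, ?_, ?_⟩
    · intro A hA
      have h1 := hmartπ A hA
      rw [← hlaw, setIntegral_map (f := fun q : Ed d × Ed d => q.2 - q.1) (hA.prod MeasurableSet.univ)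
        (continuous_snd.sub continuous_fst).aestronglyMeasurable hpairm.aemeasurable] at h1
      have hpre : (fun q : Ω × ℝ => (X q.1, Y q)) ⁻¹' (A ×ˢ (univ : Set (Ed d)))
          = (fun q : Ω × ℝ => X q.1) ⁻¹' A := by
        ext q
        simp
      rw [hpre] at h1
      exact h1
    · rw [hc, pCost, ← hlaw, integral_map hpairm.aemeasurable]
      · refine integral_congr_ae (Filter.Eventually.of_forall fun q => ?_)
        simp only [norm_sub_rev]
      · exact ((continuous_snd.sub continuous_fst).norm.rpow_const
          fun q => Or.inr (le_trans zero_le_one hp)).aestronglyMeasurable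
end
end

section
/- Let Γ be an L²-optimal dual N-quantization grid of a compactly supported μ on ℝ^d, with μ̌ the law of the corresponding dual quantization. Then for every probability measure η with μ ≤_cvx η ≤_cvx μ̌, Γ remains an L²-optimal dual N-quantization grid for η, and d_{2,N}(η)² = M₂²(η, μ̌) = ∫|y|² μ̌(dy) − ∫|x|² η(dx). -/
open MeasureTheory Set

noncomputable section

variable {E : Type*} [NormedAddCommGroup E] [NormedSpace ℝ E] [MeasurableSpace E] [BorelSpace E]

private lemma convexOn_infDist_aux {E : Type*} [NormedAddCommGroup E] [NormedSpace ℝ E]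
    {K : Set E} (hK : Convex ℝ K) (hne : K.Nonempty) :
    ConvexOn ℝ univ fun x => Metric.infDist x K := by
  refine ⟨convex_univ, fun x _ y _ a b ha hb hab => ?_⟩
  refine le_of_forall_pos_le_add fun ε hε => ?_
  obtain ⟨p, hp, hxp⟩ := (Metric.infDist_lt_iff hne).mp
    (lt_add_of_pos_right _ (half_pos hε) : Metric.infDist x K < _)
  obtain ⟨q, hq, hyq⟩ := (Metric.infDist_lt_iff hne).mp
    (lt_add_of_pos_right _ (half_pos hε) : Metric.infDist y K < _)
  have hmem : a • p + b • q ∈ K := hK hp hq ha hb hab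
  have hle : Metric.infDist (a • x + b • y) K ≤ dist (a • x + b • y) (a • p + b • q) :=
    Metric.infDist_le_dist_of_mem hmem
  have hdist : dist (a • x + b • y) (a • p + b • q) ≤ a * dist x p + b * dist y q := by
    rw [dist_eq_norm, dist_eq_norm, dist_eq_norm]
    calc ‖a • x + b • y - (a • p + b • q)‖ = ‖a • (x - p) + b • (y - q)‖ := by
          rw [smul_sub, smul_sub]; abel_nf
      _ ≤ ‖a • (x - p)‖ + ‖b • (y - q)‖ := norm_add_le _ _
      _ = a * ‖x - p‖ + b * ‖y - q‖ := by
          rw [norm_smul, norm_smul, Real.norm_of_nonneg ha, Real.norm_of_nonneg hb]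
  simp only [smul_eq_mul]
  nlinarith [mul_le_mul_of_nonneg_left hxp.le ha, mul_le_mul_of_nonneg_left hyq.le hb]

theorem stmt11 (d N : ℕ) (μ : Measure (Ed d)) [IsProbabilityMeasure μ]
    (hcomp : ∃ K : Set (Ed d), IsCompact K ∧ μ Kᶜ = 0)
    (Γ : Finset (Ed d)) (hΓcard : Γ.card ≤ N)
    (μc : Measure (Ed d)) [IsProbabilityMeasure μc]
    (hμcΓ : μc ((Γ : Set (Ed d))ᶜ) = 0) (hμμc : ConvexOrder μ μc)
    (hopt : ∫ y, ‖y‖ ^ (2 : ℝ) ∂μc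
      = sInf {c | ∃ ν : Measure (Ed d), IsProbabilityMeasure ν ∧ SuppLE N ν ∧
          ConvexOrder μ ν ∧ c = ∫ y, ‖y‖ ^ (2 : ℝ) ∂ν})
    (η : Measure (Ed d)) [IsProbabilityMeasure η]
    (hη2 : Integrable (fun x => ‖x‖ ^ (2 : ℝ)) η)
    (hμη : ConvexOrder μ η) (hημc : ConvexOrder η μc) :
    sInf {c | ∃ ν : Measure (Ed d), IsProbabilityMeasure ν ∧ ν ((Γ : Set (Ed d))ᶜ) = 0 ∧
        ConvexOrder η ν ∧ c = ∫ y, ‖y‖ ^ (2 : ℝ) ∂ν - ∫ x, ‖x‖ ^ (2 : ℝ) ∂η}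
      = sInf {c | ∃ ν : Measure (Ed d), IsProbabilityMeasure ν ∧ SuppLE N ν ∧
          ConvexOrder η ν ∧ c = ∫ y, ‖y‖ ^ (2 : ℝ) ∂ν - ∫ x, ‖x‖ ^ (2 : ℝ) ∂η} ∧
      sInf {c | ∃ ν : Measure (Ed d), IsProbabilityMeasure ν ∧ SuppLE N ν ∧
          ConvexOrder η ν ∧ c = ∫ y, ‖y‖ ^ (2 : ℝ) ∂ν - ∫ x, ‖x‖ ^ (2 : ℝ) ∂η}
        = ∫ y, ‖y‖ ^ (2 : ℝ) ∂μc - ∫ x, ‖x‖ ^ (2 : ℝ) ∂η := by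
  classical
  -- Γ is nonempty
  have hΓne : (Γ : Set (Ed d)).Nonempty := by
    by_contra h
    rw [not_nonempty_iff_eq_empty] at h
    have : μc (univ : Set (Ed d)) = 0 := by
      simpa [h] using hμcΓ
    simp [measure_univ] at this
  -- the convex hull of Γ
  set K : Set (Ed d) := convexHull ℝ (Γ : Set (Ed d)) with hKdef
  have hKconv : Convex ℝ K := convex_convexHull ℝ _
  have hKne : K.Nonempty := hΓne.mono (subset_convexHull ℝ _)
  have hKcomp : IsCompact K := Γ.finite_toSet.isCompact_convexHull ℝ
  have hKclosed : IsClosed K := hKcomp.isClosed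
  have hΓK : (Γ : Set (Ed d)) ⊆ K := subset_convexHull ℝ _
  -- the distance function to K
  set φ : Ed d → ℝ := fun x => Metric.infDist x K with hφdef
  have hφconv : ConvexOn ℝ univ φ := convexOn_infDist_aux hKconv hKne
  have hφcont : Continuous φ := Metric.continuous_infDist_pt K
  have hφnonneg : ∀ x, 0 ≤ φ x := fun x => Metric.infDist_nonneg
  -- integrability of the norm wrt η
  have hnorm_int : Integrable (fun x : Ed d => ‖x‖) η := by
    refine ((integrable_const (1 : ℝ)).add hη2).mono' (continuous_norm.aestronglyMeasurable) ?_
    filter_upwards with x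
    simp only [Pi.add_apply, Real.norm_of_nonneg (norm_nonneg x)]
    rw [show ((2 : ℝ)) = ((2 : ℕ) : ℝ) by norm_num, Real.rpow_natCast]
    nlinarith [norm_nonneg x]
  -- integrability of φ wrt η
  have hφint_η : Integrable φ η := by
    refine ((integrable_const (Metric.infDist (0 : Ed d) K)).add hnorm_int).mono'
      hφcont.aestronglyMeasurable ?_
    filter_upwards with x
    rw [Real.norm_of_nonneg (hφnonneg x)]
    calc φ x ≤ Metric.infDist 0 K + dist x 0 := Metric.infDist_le_infDist_add_dist
      _ = Metric.infDist 0 K + ‖x‖ := by rw [dist_zero_right]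
  -- φ vanishes μc-a.e.
  have hμcΓae : ∀ᵐ x ∂μc, x ∈ (Γ : Set (Ed d)) := by
    rw [ae_iff]
    exact hμcΓ
  have hφμc0 : φ =ᵐ[μc] 0 := by
    filter_upwards [hμcΓae] with x hx
    simp only [hφdef, Pi.zero_apply]
    exact Metric.infDist_zero_of_mem (hΓK hx)
  have hφint_μc : Integrable φ μc := (integrable_zero _ _ _).congr hφμc0.symm
  have hφintμc0 : ∫ x, φ x ∂μc = 0 := by
    rw [integral_congr_ae hφμc0]
    simp
  -- η is supported on K
  have hφintη0 : ∫ x, φ x ∂η = 0 := by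
    have h1 : ∫ x, φ x ∂η ≤ 0 := by
      have := hημc φ hφconv hφint_η hφint_μc
      rwa [hφintμc0] at this
    have h2 : 0 ≤ ∫ x, φ x ∂η := integral_nonneg hφnonneg
    linarith
  have hηK : ∀ᵐ x ∂η, x ∈ K := by
    have hae0 : φ =ᵐ[η] 0 := by
      rw [← integral_eq_zero_iff_of_nonneg hφnonneg hφint_η]
      exact hφintη0
    filter_upwards [hae0] with x hx
    rw [hKclosed.mem_iff_infDist_zero hKne]
    simpa [hφdef] using hx
  -- any continuous function is integrable wrt η
  have hcont_int : ∀ ψ : Ed d → ℝ, Continuous ψ → Integrable ψ η := by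
    intro ψ hψ
    obtain ⟨C, hC⟩ := hKcomp.exists_bound_of_continuousOn hψ.continuousOn
    refine (integrable_const C).mono' hψ.aestronglyMeasurable ?_
    filter_upwards [hηK] with x hx
    exact hC x hx
  -- transitivity of the convex order through η
  have htrans : ∀ ν : Measure (Ed d), ConvexOrder η ν → ConvexOrder μ ν := by
    intro ν hην ψ hψconv hψμ hψν
    have hψcont : Continuous ψ := by
      rw [← continuousOn_univ]
      exact hψconv.continuousOn isOpen_univ
    have hψη : Integrable ψ η := hcont_int ψ hψcont
    exact le_trans (hμη ψ hψconv hψμ hψη) (hην ψ hψconv hψη hψν)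
  -- the core estimate
  have hcore : ∀ ν : Measure (Ed d), IsProbabilityMeasure ν → SuppLE N ν → ConvexOrder η ν →
      ∫ y, ‖y‖ ^ (2 : ℝ) ∂μc ≤ ∫ y, ‖y‖ ^ (2 : ℝ) ∂ν := by
    intro ν hνprob hνsupp hην
    rw [hopt]
    refine csInf_le ⟨0, ?_⟩ ?_
    · rintro c ⟨ν', hν'prob, -, -, rfl⟩
      exact integral_nonneg fun y => Real.rpow_nonneg (norm_nonneg y) _
    · exact ⟨ν, hνprob, hνsupp, htrans ν hην, rfl⟩
  set c₀ : ℝ := ∫ y, ‖y‖ ^ (2 : ℝ) ∂μc - ∫ x, ‖x‖ ^ (2 : ℝ) ∂η with hc₀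
  -- lower bounds for both sets
  have hlbB : ∀ c ∈ {c | ∃ ν : Measure (Ed d), IsProbabilityMeasure ν ∧ SuppLE N ν ∧
      ConvexOrder η ν ∧ c = ∫ y, ‖y‖ ^ (2 : ℝ) ∂ν - ∫ x, ‖x‖ ^ (2 : ℝ) ∂η}, c₀ ≤ c := by
    rintro c ⟨ν, hνprob, hνsupp, hην, rfl⟩
    exact sub_le_sub_right (hcore ν hνprob hνsupp hην) _
  have hlbA : ∀ c ∈ {c | ∃ ν : Measure (Ed d), IsProbabilityMeasure ν ∧
      ν ((Γ : Set (Ed d))ᶜ) = 0 ∧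
      ConvexOrder η ν ∧ c = ∫ y, ‖y‖ ^ (2 : ℝ) ∂ν - ∫ x, ‖x‖ ^ (2 : ℝ) ∂η}, c₀ ≤ c := by
    rintro c ⟨ν, hνprob, hνΓ, hην, rfl⟩
    exact sub_le_sub_right (hcore ν hνprob ⟨Γ, hΓcard, hνΓ⟩ hην) _
  have hmemB : c₀ ∈ {c | ∃ ν : Measure (Ed d), IsProbabilityMeasure ν ∧ SuppLE N ν ∧
      ConvexOrder η ν ∧ c = ∫ y, ‖y‖ ^ (2 : ℝ) ∂ν - ∫ x, ‖x‖ ^ (2 : ℝ) ∂η} :=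
    ⟨μc, inferInstance, ⟨Γ, hΓcard, hμcΓ⟩, hημc, rfl⟩
  have hmemA : c₀ ∈ {c | ∃ ν : Measure (Ed d), IsProbabilityMeasure ν ∧
      ν ((Γ : Set (Ed d))ᶜ) = 0 ∧
      ConvexOrder η ν ∧ c = ∫ y, ‖y‖ ^ (2 : ℝ) ∂ν - ∫ x, ‖x‖ ^ (2 : ℝ) ∂η} :=
    ⟨μc, inferInstance, hμcΓ, hημc, rfl⟩
  have hB : sInf {c | ∃ ν : Measure (Ed d), IsProbabilityMeasure ν ∧ SuppLE N ν ∧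
      ConvexOrder η ν ∧ c = ∫ y, ‖y‖ ^ (2 : ℝ) ∂ν - ∫ x, ‖x‖ ^ (2 : ℝ) ∂η} = c₀ :=
    le_antisymm (csInf_le ⟨c₀, hlbB⟩ hmemB) (le_csInf ⟨c₀, hmemB⟩ hlbB)
  have hA : sInf {c | ∃ ν : Measure (Ed d), IsProbabilityMeasure ν ∧
      ν ((Γ : Set (Ed d))ᶜ) = 0 ∧
      ConvexOrder η ν ∧ c = ∫ y, ‖y‖ ^ (2 : ℝ) ∂ν - ∫ x, ‖x‖ ^ (2 : ℝ) ∂η} = c₀ :=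
    le_antisymm (csInf_le ⟨c₀, hlbA⟩ hmemA) (le_csInf ⟨c₀, hmemA⟩ hlbA)
  exact ⟨hA.trans hB.symm, hB⟩
end
end

section
/- For every p ≥ 1, μ ∈ P_p(ℝ^d) compactly supported and N ≥ d+1, one has e_{p,N}(μ) = W_p(μ, P(ℝ^d,N)) ≤ W_p(μ, P_{≥μ}(ℝ^d,N)) ≤ d_{p,N}(μ): the primal quantization error is bounded above by the Wasserstein distance to convex-order-dominating N-point measures, itself bounded by the dual quantization error. -/
open MeasureTheory Set
open scoped ENNReal NNReal

noncomputable section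

variable {E : Type*} [NormedAddCommGroup E] [NormedSpace ℝ E] [MeasurableSpace E] [BorelSpace E]

set_option linter.unusedSectionVars false
set_option maxHeartbeats 1000000


lemma integrable_of_null_compl {X F : Type*} [MeasurableSpace X] [TopologicalSpace X]
    [OpensMeasurableSpace X] [SecondCountableTopology X] [NormedAddCommGroup F]
    {μ : Measure X} [IsFiniteMeasure μ]
    {K : Set X} (hK : IsCompact K) (hμK : μ Kᶜ = 0) {f : X → F} (hf : Continuous f) :
    Integrable f μ := by
  obtain ⟨C, hC⟩ := hK.exists_bound_of_continuousOn hf.continuousOn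
  refine ⟨hf.aestronglyMeasurable, HasFiniteIntegral.of_bounded (C := C) ?_⟩
  filter_upwards [mem_ae_iff.2 hμK] with x hx
  exact hC x hx

lemma cont_rpow_comp {X : Type*} [TopologicalSpace X] {f : X → ℝ} (hf : Continuous f)
    {p : ℝ} (hp : 0 ≤ p) : Continuous fun x => f x ^ p :=
  (Real.continuous_rpow_const hp).comp hf

/-- recursive nearest-point selector -/
def npAux (a : E) : List E → E → E
  | [] => fun _ => a
  | b :: l => fun x => if dist x b ≤ dist x (npAux a l x) then b else npAux a l x

lemma npAux_mem (a : E) (l : List E) (x : E) : npAux a l x ∈ a :: l := by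
  induction l with
  | nil => simp [npAux]
  | cons b l ih =>
    simp only [npAux]
    by_cases h : dist x b ≤ dist x (npAux a l x)
    · rw [if_pos h]; exact List.mem_cons_of_mem a List.mem_cons_self
    · rw [if_neg h]
      rcases List.mem_cons.1 ih with h' | h'
      · exact List.mem_cons.2 (Or.inl h')
      · exact List.mem_cons_of_mem a (List.mem_cons_of_mem b h')

lemma npAux_le (a : E) (l : List E) (x : E) :
    ∀ y ∈ a :: l, dist x (npAux a l x) ≤ dist x y := by
  induction l with
  | nil =>
    intro y hy
    rcases List.mem_cons.1 hy with rfl | hy'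
    · simp [npAux]
    · simp at hy'
  | cons b l ih =>
    intro y hy
    have hy2 : y = b ∨ y ∈ a :: l := by
      rcases List.mem_cons.1 hy with rfl | hy'
      · right; exact List.mem_cons_self
      · rcases List.mem_cons.1 hy' with rfl | h''
        · left; rfl
        · right; exact List.mem_cons_of_mem a h''
    simp only [npAux]
    by_cases h : dist x b ≤ dist x (npAux a l x)
    · rw [if_pos h]
      rcases hy2 with rfl | hm
      · exact le_refl _
      · exact h.trans (ih y hm)
    · rw [if_neg h]
      rcases hy2 with rfl | hm
      · exact (not_le.1 h).le
      · exact ih y hm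

lemma npAux_measurable (a : E) (l : List E) : Measurable (npAux a l) := by
  induction l with
  | nil => exact measurable_const
  | cons b l ih =>
    have hrange : ∀ x, npAux a l x ∈ a :: l := npAux_mem a l
    have hset : MeasurableSet {x : E | dist x b ≤ dist x (npAux a l x)} := by
      have heq : {x : E | dist x b ≤ dist x (npAux a l x)} =
          ⋃ v ∈ {y | y ∈ a :: l}, (npAux a l ⁻¹' {v}) ∩ {x | dist x b ≤ dist x v} := by
        ext x
        simp only [mem_setOf_eq, mem_iUnion, mem_inter_iff, mem_preimage, mem_singleton_iff]
        constructor
        · intro h; exact ⟨npAux a l x, hrange x, rfl, h⟩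
        · rintro ⟨v, _, rfl, h⟩; exact h
      rw [heq]
      refine MeasurableSet.biUnion ((List.finite_toSet _).countable) fun v _ => ?_
      exact (ih (measurableSet_singleton v)).inter
        (measurableSet_le (continuous_id.dist continuous_const).measurable
          (continuous_id.dist continuous_const).measurable)
    exact Measurable.ite hset measurable_const ih

lemma exists_nearestProj (Γ : Finset E) (hΓ : Γ.Nonempty) :
    ∃ f : E → E, Measurable f ∧ ∀ x, f x ∈ Γ ∧ ‖x - f x‖ = Metric.infDist x (Γ : Set E) := by
  obtain ⟨a, ha⟩ := hΓ
  refine ⟨npAux a Γ.toList, npAux_measurable a Γ.toList, fun x => ?_⟩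
  have hmem : npAux a Γ.toList x ∈ Γ := by
    rcases List.mem_cons.1 (npAux_mem a Γ.toList x) with h | h
    · rwa [h]
    · exact Finset.mem_toList.1 h
  refine ⟨hmem, ?_⟩
  rw [← dist_eq_norm]
  refine le_antisymm ?_ (Metric.infDist_le_dist_of_mem hmem)
  by_contra hlt
  push_neg at hlt
  obtain ⟨y, hy, hdy⟩ := (Metric.infDist_lt_iff ⟨_, hmem⟩).1 hlt
  have : dist x (npAux a Γ.toList x) ≤ dist x y :=
    npAux_le a Γ.toList x y (List.mem_cons_of_mem a (Finset.mem_toList.2 hy))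
  exact absurd (this.trans_lt hdy) (lt_irrefl _)


lemma pCost_nonneg (p : ℝ) (π : Measure (E × E)) : 0 ≤ pCost p π :=
  integral_nonneg fun q => Real.rpow_nonneg (norm_nonneg _) p

lemma quantErrPow_le_pCost [SecondCountableTopology E] {p : ℝ} (hp : 1 ≤ p)
    {μ ν : Measure E} [IsProbabilityMeasure μ] {K : Set E} (hK : IsCompact K) (hμK : μ Kᶜ = 0)
    (s : Finset E) (hν : ν ((s : Set E)ᶜ) = 0) {π : Measure (E × E)}
    (hπp : IsProbabilityMeasure π) (hπ : IsCoupling π μ ν) :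
    quantErrPow p s μ ≤ pCost p π := by
  obtain ⟨hfst, hsnd⟩ := hπ
  have hp0 : (0:ℝ) ≤ p := le_trans zero_le_one hp
  have hsc : IsClosed (s : Set E) := s.finite_toSet.isClosed
  have hae1 : ∀ᵐ q ∂π, q.1 ∈ K := by
    apply mem_ae_iff.2
    have h1 : {q : E × E | q.1 ∈ K}ᶜ = Prod.fst ⁻¹' Kᶜ := rfl
    rw [h1, ← Measure.map_apply measurable_fst hK.isClosed.measurableSet.compl, hfst]
    exact hμK
  have hae2 : ∀ᵐ q ∂π, q.2 ∈ (s : Set E) := by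
    apply mem_ae_iff.2
    have h1 : {q : E × E | q.2 ∈ (s : Set E)}ᶜ = Prod.snd ⁻¹' ((s : Set E))ᶜ := rfl
    rw [h1, ← Measure.map_apply measurable_snd hsc.measurableSet.compl, hsnd]
    exact hν
  have hKs : IsCompact (K ×ˢ (s : Set E)) := hK.prod s.finite_toSet.isCompact
  have hπnull : π ((K ×ˢ (s : Set E))ᶜ) = 0 := by
    refine mem_ae_iff.1 ?_
    filter_upwards [hae1, hae2] with q h1 h2
    exact ⟨h1, h2⟩
  have hcost_cont : Continuous fun q : E × E => ‖q.2 - q.1‖ ^ p :=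
    cont_rpow_comp (continuous_snd.sub continuous_fst).norm hp0
  have hqcont : Continuous fun x : E => Metric.infDist x (s : Set E) ^ p :=
    cont_rpow_comp (Metric.continuous_infDist_pt _) hp0
  have hint1 : Integrable (fun q : E × E => Metric.infDist q.1 (s : Set E) ^ p) π :=
    integrable_of_null_compl hKs hπnull (hqcont.comp continuous_fst)
  have hint2 : Integrable (fun q : E × E => ‖q.2 - q.1‖ ^ p) π :=
    integrable_of_null_compl hKs hπnull hcost_cont
  have hmono : ∀ᵐ q ∂π, Metric.infDist q.1 (s : Set E) ^ p ≤ ‖q.2 - q.1‖ ^ p := by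
    filter_upwards [hae2] with q h2
    have h3 : Metric.infDist q.1 (s : Set E) ≤ dist q.1 q.2 :=
      Metric.infDist_le_dist_of_mem h2
    refine Real.rpow_le_rpow Metric.infDist_nonneg ?_ hp0
    rwa [dist_comm, dist_eq_norm] at h3
  have key := integral_mono_ae hint1 hint2 hmono
  have heq : ∫ q, Metric.infDist q.1 (s : Set E) ^ p ∂π = quantErrPow p s μ := by
    rw [quantErrPow, ← hfst, integral_map measurable_fst.aemeasurable hqcont.aestronglyMeasurable]
  rw [pCost, ← heq]
  exact key

lemma exists_coupling_of_quantizer [SecondCountableTopology E] {p : ℝ} (hp : 1 ≤ p)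
    {μ : Measure E} [IsProbabilityMeasure μ] (Γ : Finset E)
    {f : E → E} (hf : Measurable f)
    (hfp : ∀ x, f x ∈ Γ ∧ ‖x - f x‖ = Metric.infDist x (Γ : Set E)) :
    ∃ ν : Measure E, IsProbabilityMeasure ν ∧ ν ((Γ : Set E)ᶜ) = 0 ∧
      ∃ π : Measure (E × E), IsProbabilityMeasure π ∧ IsCoupling π μ ν ∧
        pCost p π = quantErrPow p Γ μ := by
  have hp0 : (0:ℝ) ≤ p := le_trans zero_le_one hp
  have hg : Measurable fun x : E => (x, f x) := measurable_id.prodMk hf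
  have hcost_cont : Continuous fun q : E × E => ‖q.2 - q.1‖ ^ p :=
    cont_rpow_comp (continuous_snd.sub continuous_fst).norm hp0
  refine ⟨μ.map f, Measure.isProbabilityMeasure_map hf.aemeasurable, ?_,
    μ.map (fun x => (x, f x)), Measure.isProbabilityMeasure_map hg.aemeasurable, ⟨?_, ?_⟩, ?_⟩
  · rw [Measure.map_apply hf Γ.finite_toSet.isClosed.measurableSet.compl]
    have h0 : f ⁻¹' ((Γ : Set E))ᶜ = ∅ := by
      ext x; simp [(hfp x).1]
    rw [h0]; simp
  · rw [Measure.map_map measurable_fst hg]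
    have : Prod.fst ∘ (fun x : E => (x, f x)) = id := rfl
    rw [this, Measure.map_id]
  · rw [Measure.map_map measurable_snd hg]
    rfl
  · rw [pCost, integral_map hg.aemeasurable hcost_cont.aestronglyMeasurable, quantErrPow]
    refine integral_congr_ae (Filter.Eventually.of_forall fun x => ?_)
    simp only
    rw [norm_sub_rev, (hfp x).2]

lemma Ed_sum_apply {d : ℕ} {ι : Type*} (s : Finset ι) (f : ι → Ed d) (j : Fin d) :
    (∑ i ∈ s, f i) j = ∑ i ∈ s, f i j := by
  classical
  induction s using Finset.induction with
  | empty => simp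
  | insert _ _ hni ih =>
    rw [Finset.sum_insert hni, Finset.sum_insert hni, PiLp.add_apply, ih]

lemma withDensity_finset_sum' {X : Type*} [MeasurableSpace X] {ι : Type*} (s : Finset ι)
    {f : ι → X → ℝ≥0∞} (hf : ∀ i, Measurable (f i)) (μ : Measure X) :
    μ.withDensity (fun x => ∑ i ∈ s, f i x) = ∑ i ∈ s, μ.withDensity (f i) := by
  classical
  induction s using Finset.induction with
  | empty => simp
  | insert _ _ =>
    rename_i a s hni ih
    rw [Finset.sum_insert hni,
      show (fun x => ∑ j ∈ insert a s, f j x) = (f a + fun x => ∑ j ∈ s, f j x)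
        from funext fun x => Finset.sum_insert hni,
      withDensity_add_left (hf a), ih]

lemma map_finset_sum' {X Y : Type*} [MeasurableSpace X] [MeasurableSpace Y] {ι : Type*}
    (s : Finset ι) (μ : ι → Measure X) {f : X → Y} (hf : Measurable f) :
    (∑ i ∈ s, μ i).map f = ∑ i ∈ s, (μ i).map f := by
  classical
  induction s using Finset.induction with
  | empty => simp [Measure.map_zero]
  | insert _ _ hni ih =>
    rw [Finset.sum_insert hni, Finset.sum_insert hni, Measure.map_add _ _ hf, ih]

lemma restrict_finset_sum' {X : Type*} [MeasurableSpace X] {ι : Type*}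
    (s : Finset ι) (μ : ι → Measure X) (A : Set X) :
    (∑ i ∈ s, μ i).restrict A = ∑ i ∈ s, (μ i).restrict A := by
  classical
  induction s using Finset.induction with
  | empty => simp
  | insert _ _ hni ih =>
    rw [Finset.sum_insert hni, Finset.sum_insert hni, Measure.restrict_add, ih]

lemma coord_abs_le_norm {d : ℕ} (x : Ed d) (j : Fin d) : |x j| ≤ ‖x‖ := by
  rw [EuclideanSpace.norm_eq]
  have h1 : |x j| = Real.sqrt (‖x j‖ ^ 2) := by
    rw [Real.sqrt_sq_eq_abs, Real.norm_eq_abs, abs_abs]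
  rw [h1]
  apply Real.sqrt_le_sqrt
  exact Finset.single_le_sum (fun i _ => sq_nonneg ‖x i‖) (Finset.mem_univ j)

section Simplex

variable {d : ℕ} {r : ℝ}

/-- barycentric-type coordinates -/
def lamS (d : ℕ) (R M : ℝ) (i : Fin (d + 1)) (x : Ed d) : ℝ :=
  if h : (i : ℕ) < d then (x ⟨i, h⟩ + R) / M else 1 - ∑ j : Fin d, (x j + R) / M

/-- vertices of a big simplex -/
def vS (d : ℕ) (R M : ℝ) (i : Fin (d + 1)) : Ed d :=
  WithLp.toLp 2 (fun j : Fin d => (if (j : ℕ) = (i : ℕ) then M else 0) - R)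

lemma lamS_castSucc (R M : ℝ) (i : Fin d) (x : Ed d) :
    lamS d R M i.castSucc x = (x i + R) / M := by
  have h : ((i.castSucc : Fin (d+1)) : ℕ) < d := by simpa using i.isLt
  rw [lamS, dif_pos h]
  congr 1

lemma lamS_last (R M : ℝ) (x : Ed d) :
    lamS d R M (Fin.last d) x = 1 - ∑ j : Fin d, (x j + R) / M := by
  rw [lamS, dif_neg (by simp)]

lemma vS_apply_castSucc (R M : ℝ) (i : Fin d) (j : Fin d) :
    vS d R M i.castSucc j = (if j = i then M else 0) - R := by
  rw [vS]
  rw [PiLp.toLp_apply]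
  congr 1
  simp [Fin.ext_iff]

lemma vS_apply_last (R M : ℝ) (j : Fin d) :
    vS d R M (Fin.last d) j = -R := by
  rw [vS]
  rw [PiLp.toLp_apply]
  have : ¬ ((j : ℕ) = ((Fin.last d : Fin (d+1)) : ℕ)) := by
    simp [Fin.ext_iff]
    omega
  rw [if_neg this]
  ring

lemma lamS_sum (R M : ℝ) (x : Ed d) : ∑ i : Fin (d+1), lamS d R M i x = 1 := by
  rw [Fin.sum_univ_castSucc, lamS_last]
  simp_rw [lamS_castSucc]
  ring

lemma lamS_comb (R M : ℝ) (hM : M ≠ 0) (x : Ed d) :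
    ∑ i : Fin (d+1), lamS d R M i x • vS d R M i = x := by
  refine PiLp.ext fun j => ?_
  rw [Ed_sum_apply]
  have h1 : ∀ i : Fin (d+1), (lamS d R M i x • vS d R M i) j
      = lamS d R M i x * (vS d R M i j) := fun i => rfl
  simp_rw [h1]
  rw [Fin.sum_univ_castSucc]
  simp_rw [vS_apply_castSucc, vS_apply_last, lamS_castSucc, lamS_last]
  have h2 : ∀ i : Fin d, (x i + R) / M * ((if j = i then M else 0) - R)
      = (x i + R) / M * (if j = i then M else 0) - (x i + R) / M * R := fun i => by ring
  simp_rw [h2, Finset.sum_sub_distrib]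
  have h3 : ∑ i : Fin d, (x i + R) / M * (if j = i then M else 0) = (x j + R) := by
    rw [Finset.sum_eq_single j]
    · rw [if_pos rfl]
      field_simp
    · intro b _ hb
      rw [if_neg (Ne.symm hb), mul_zero]
    · intro h; exact absurd (Finset.mem_univ j) h
  rw [h3]
  rw [← Finset.sum_mul]
  ring

lemma lamS_continuous (R M : ℝ) (i : Fin (d+1)) : Continuous (lamS d R M i) := by
  by_cases h : (i : ℕ) < d
  · have he : lamS d R M i = fun x : Ed d => (x ⟨i, h⟩ + R) / M :=
      funext fun x => by rw [lamS, dif_pos h]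
    rw [he]
    exact (((EuclideanSpace.proj (⟨i, h⟩ : Fin d) :
        Ed d →L[ℝ] ℝ).continuous).add continuous_const).div_const M
  · have he : lamS d R M i = fun x : Ed d => 1 - ∑ j : Fin d, (x j + R) / M :=
      funext fun x => by rw [lamS, dif_neg h]
    rw [he]
    refine continuous_const.sub (continuous_finset_sum _ fun j _ => ?_)
    exact (((EuclideanSpace.proj j : Ed d →L[ℝ] ℝ).continuous).add continuous_const).div_const M

lemma lamS_nonneg {R M : ℝ} (hR : 1 ≤ R) (hM : d * (2 * R) ≤ M) (hM0 : 0 < M)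
    {x : Ed d} (hx : ‖x‖ ≤ R - 1) (i : Fin (d+1)) : 0 ≤ lamS d R M i x := by
  have hco : ∀ j : Fin d, |x j| ≤ R - 1 := fun j => (coord_abs_le_norm x j).trans hx
  simp only [lamS]
  split
  · next h =>
    have h0 := hco ⟨i, h⟩
    have h1 : -(R-1) ≤ x ⟨i, h⟩ := neg_le_of_abs_le h0
    have h2 : (0:ℝ) ≤ x ⟨i, h⟩ + R := by linarith
    positivity
  · have h1 : ∑ j : Fin d, (x j + R) / M ≤ 1 := by
      rw [← Finset.sum_div, div_le_one hM0]
      calc ∑ j : Fin d, (x j + R) ≤ ∑ _j : Fin d, 2 * R := by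
            refine Finset.sum_le_sum fun j _ => ?_
            have h2 := le_of_abs_le (hco j)
            linarith
        _ = d * (2 * R) := by
            rw [Finset.sum_const, Finset.card_univ, Fintype.card_fin, nsmul_eq_mul]
        _ ≤ M := hM
    linarith


lemma exists_dominating (d : ℕ) (μ : Measure (Ed d)) [IsProbabilityMeasure μ]
    {K : Set (Ed d)} (hK : IsCompact K) (hμK : μ Kᶜ = 0) :
    ∃ ν : Measure (Ed d), IsProbabilityMeasure ν ∧ SuppLE (d+1) ν ∧ ConvexOrder μ ν ∧
      ∃ π : Measure (Ed d × Ed d), IsMartingaleCoupling π μ ν := by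
  classical
  obtain ⟨r0, hr0⟩ := hK.isBounded.subset_closedBall 0
  set R : ℝ := max r0 0 + 1 with hRdef
  have hR1 : 1 ≤ R := by
    have h0 : (0:ℝ) ≤ max r0 0 := le_max_right _ _
    simp only [hRdef]; linarith
  have hKR : K ⊆ Metric.closedBall 0 (R - 1) := by
    refine hr0.trans (Metric.closedBall_subset_closedBall ?_)
    simp [hRdef]
  set M : ℝ := d * (2 * R) + 1 with hMdef
  have hM0 : (0:ℝ) < M := by
    have : (0:ℝ) ≤ d * (2 * R) := by positivity
    linarith
  have hMle : (d:ℝ) * (2 * R) ≤ M := by linarith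
  set lam := lamS d R M with hlamdef
  set v := vS d R M with hvdef
  have haeK : ∀ᵐ x ∂μ, x ∈ K := mem_ae_iff.2 hμK
  have hnn : ∀ᵐ x ∂μ, ∀ i, 0 ≤ lam i x := by
    filter_upwards [haeK] with x hx i
    have hnx : ‖x‖ ≤ R - 1 := by
      have := hKR hx
      simpa [Metric.mem_closedBall, dist_zero_right] using this
    exact lamS_nonneg hR1 hMle hM0 hnx i
  have hlc : ∀ i, Continuous (lam i) := lamS_continuous R M
  have hlint : ∀ i, Integrable (lam i) μ := fun i =>
    integrable_of_null_compl hK hμK (hlc i)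
  set w : Fin (d+1) → ℝ := fun i => ∫ x, lam i x ∂μ with hwdef
  have hw0 : ∀ i, 0 ≤ w i := fun i =>
    integral_nonneg_of_ae (by filter_upwards [hnn] with x hx using hx i)
  have hwsum : ∑ i, w i = 1 := by
    rw [hwdef, ← integral_finset_sum _ (fun i _ => hlint i)]
    have h1 : ∀ x : Ed d, ∑ i : Fin (d+1), lam i x = 1 := lamS_sum R M
    simp_rw [h1]
    simp
  set dens : Fin (d+1) → Ed d → ℝ≥0∞ := fun i x => ENNReal.ofReal (lam i x) with hdensdef
  have hdensm : ∀ i, Measurable (dens i) := fun i => (hlc i).measurable.ennreal_ofReal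
  set ρ : Fin (d+1) → Measure (Ed d) := fun i => μ.withDensity (dens i) with hρdef
  have hρuniv : ∀ i, ρ i univ = ENNReal.ofReal (w i) := by
    intro i
    rw [hρdef]
    simp only
    rw [withDensity_apply _ MeasurableSet.univ, Measure.restrict_univ,
      ← ofReal_integral_eq_lintegral_ofReal (hlint i)
        (by filter_upwards [hnn] with x hx using hx i)]
  have hρK : ∀ i, ρ i Kᶜ = 0 := fun i => withDensity_absolutelyContinuous μ (dens i) hμK
  have hρfin : ∀ i, IsFiniteMeasure (ρ i) := fun i =>
    ⟨by rw [hρuniv i]; exact ENNReal.ofReal_lt_top⟩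
  have hρsum : ∑ i, ρ i = μ := by
    rw [hρdef, ← withDensity_finset_sum' _ hdensm]
    have h1 : (fun x => ∑ i : Fin (d+1), dens i x) =ᵐ[μ] (fun _ => (1:ℝ≥0∞)) := by
      filter_upwards [hnn] with x hx
      rw [hdensdef]
      simp only
      rw [← ENNReal.ofReal_sum_of_nonneg (fun i _ => hx i), lamS_sum R M x,
        ENNReal.ofReal_one]
    calc μ.withDensity (fun x => ∑ i, dens i x) = μ.withDensity (fun _ => 1) :=
          withDensity_congr_ae h1
      _ = μ := by
          rw [show (fun _ : Ed d => (1:ℝ≥0∞)) = (1 : Ed d → ℝ≥0∞) from rfl, withDensity_one]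
  -- the measures
  set ν : Measure (Ed d) := ∑ i, (ρ i).map (fun _ => v i) with hνdef
  set g : Fin (d+1) → Ed d → Ed d × Ed d := fun i x => (x, v i) with hgdef
  have hgm : ∀ i, Measurable (g i) := fun i => measurable_id.prodMk measurable_const
  set π : Measure (Ed d × Ed d) := ∑ i, (ρ i).map (g i) with hπdef
  have hνuniv : ν univ = 1 := by
    rw [hνdef]
    simp only [Measure.coe_finset_sum, Finset.sum_apply]
    have h1 : ∀ i : Fin (d+1), ((ρ i).map (fun _ => v i)) univ = ENNReal.ofReal (w i) := by
      intro i
      rw [Measure.map_apply measurable_const MeasurableSet.univ, preimage_univ, hρuniv i]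
    simp_rw [h1]
    rw [← ENNReal.ofReal_sum_of_nonneg (fun i _ => hw0 i), hwsum, ENNReal.ofReal_one]
  have hπuniv : π univ = 1 := by
    rw [hπdef]
    simp only [Measure.coe_finset_sum, Finset.sum_apply]
    have h1 : ∀ i : Fin (d+1), ((ρ i).map (g i)) univ = ENNReal.ofReal (w i) := by
      intro i
      rw [Measure.map_apply (hgm i) MeasurableSet.univ, preimage_univ, hρuniv i]
    simp_rw [h1]
    rw [← ENNReal.ofReal_sum_of_nonneg (fun i _ => hw0 i), hwsum, ENNReal.ofReal_one]
  have hνprob : IsProbabilityMeasure ν := ⟨hνuniv⟩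
  have hπprob : IsProbabilityMeasure π := ⟨hπuniv⟩
  -- coupling
  have hfst : π.map Prod.fst = μ := by
    rw [hπdef, map_finset_sum' _ _ measurable_fst]
    have h1 : ∀ i : Fin (d+1), ((ρ i).map (g i)).map Prod.fst = ρ i := by
      intro i
      rw [Measure.map_map measurable_fst (hgm i)]
      have : Prod.fst ∘ g i = id := rfl
      rw [this, Measure.map_id]
    simp_rw [h1]
    exact hρsum
  have hsnd : π.map Prod.snd = ν := by
    rw [hπdef, map_finset_sum' _ _ measurable_snd, hνdef]
    congr 1
    funext i
    rw [Measure.map_map measurable_snd (hgm i)]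
    rfl
  -- SuppLE
  have hsupp : SuppLE (d+1) ν := by
    refine ⟨Finset.image v Finset.univ, (Finset.card_image_le.trans (by simp)), ?_⟩
    rw [hνdef]
    simp only [Measure.coe_finset_sum, Finset.sum_apply]
    have h1 : ∀ i : Fin (d+1),
        ((ρ i).map (fun _ => v i)) ((Finset.image v Finset.univ : Finset (Ed d)) : Set (Ed d))ᶜ = 0 := by
      intro i
      rw [Measure.map_apply measurable_const
        (Finset.image v Finset.univ).finite_toSet.isClosed.measurableSet.compl]
      have h2 : (fun _ : Ed d => v i) ⁻¹'
          ((Finset.image v Finset.univ : Finset (Ed d)) : Set (Ed d))ᶜ = ∅ := by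
        refine eq_empty_iff_forall_notMem.2 fun x hx => ?_
        exact hx (Finset.mem_coe.2 (Finset.mem_image.2 ⟨i, Finset.mem_univ i, rfl⟩))
      rw [h2]; simp
    simp_rw [h1]
    simp
  -- integral of φ against ν
  have hνint : ∀ φ : Ed d → ℝ, Integrable φ ν → ∫ x, φ x ∂ν = ∑ i, w i * φ (v i) := by
    intro φ hφ
    rw [hνdef] at hφ ⊢
    rw [integral_finset_sum_measure (integrable_finset_sum_measure.1 hφ)]
    congr 1
    funext i
    rw [Measure.map_const, integral_smul_measure, integral_dirac, hρuniv i,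
      ENNReal.toReal_ofReal (hw0 i)]
    rfl
  -- convex order
  have hcvx : ConvexOrder μ ν := by
    intro φ hφ hφμ hφν
    rw [hνint φ hφν]
    have hpt : ∀ᵐ x ∂μ, φ x ≤ ∑ i, lam i x * φ (v i) := by
      filter_upwards [hnn] with x hx
      have h1 := hφ.map_sum_le (t := Finset.univ) (fun i _ => hx i)
        (lamS_sum R M x) (fun i _ => mem_univ (v i))
      rw [lamS_comb R M (ne_of_gt hM0) x] at h1
      simpa [smul_eq_mul] using h1
    have hri : Integrable (fun x => ∑ i, lam i x * φ (v i)) μ :=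
      integrable_finset_sum _ (fun i _ => (hlint i).mul_const _)
    calc ∫ x, φ x ∂μ ≤ ∫ x, ∑ i, lam i x * φ (v i) ∂μ := integral_mono_ae hφμ hri hpt
      _ = ∑ i, w i * φ (v i) := by
          rw [integral_finset_sum _ (fun i _ => (hlint i).mul_const _)]
          congr 1
          funext i
          rw [integral_mul_const]
  -- martingale property
  have hmart : ∀ A : Set (Ed d), MeasurableSet A →
      ∫ q in A ×ˢ (univ : Set (Ed d)), (q.2 - q.1) ∂π = 0 := by
    intro A hA
    have hAm : MeasurableSet (A ×ˢ (univ : Set (Ed d))) := hA.prod MeasurableSet.univ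
    rw [hπdef, restrict_finset_sum']
    have hKi : ∀ i : Fin (d+1), IsCompact (K ×ˢ ({v i} : Set (Ed d))) :=
      fun i => hK.prod isCompact_singleton
    have hπiK : ∀ i : Fin (d+1), ((ρ i).map (g i)) ((K ×ˢ ({v i} : Set (Ed d)))ᶜ) = 0 := by
      intro i
      rw [Measure.map_apply (hgm i) ((hKi i).isClosed.measurableSet.compl)]
      have h2 : g i ⁻¹' (K ×ˢ ({v i} : Set (Ed d)))ᶜ = Kᶜ := by
        ext x
        simp [hgdef]
      rw [h2]
      exact hρK i
    have hcont : Continuous (fun q : Ed d × Ed d => q.2 - q.1) :=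
      continuous_snd.sub continuous_fst
    have hint : ∀ i : Fin (d+1),
        Integrable (fun q : Ed d × Ed d => q.2 - q.1) (((ρ i).map (g i)).restrict (A ×ˢ univ)) := by
      intro i
      have := hρfin i
      exact (integrable_of_null_compl (hKi i) (hπiK i) hcont).restrict
    rw [integral_finset_sum_measure (fun i _ => hint i)]
    have hterm : ∀ i : Fin (d+1),
        ∫ q in A ×ˢ (univ : Set (Ed d)), (q.2 - q.1) ∂((ρ i).map (g i))
          = ∫ x in A, ((lam i x).toNNReal : ℝ) • (v i - x) ∂μ := by
      intro i
      rw [Measure.restrict_map (hgm i) hAm]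
      have h2 : g i ⁻¹' (A ×ˢ (univ : Set (Ed d))) = A := by
        ext x; simp [hgdef]
      rw [h2, integral_map (hgm i).aemeasurable hcont.aestronglyMeasurable]
      have h3 : (ρ i).restrict A = (μ.restrict A).withDensity (dens i) := by
        rw [hρdef]
        exact restrict_withDensity hA (dens i)
      rw [h3]
      have h4 : dens i = fun x => (((lam i x).toNNReal : ℝ≥0) : ℝ≥0∞) := rfl
      rw [h4, integral_withDensity_eq_integral_smul ((hlc i).measurable.real_toNNReal)]
      congr 1
    simp_rw [hterm]
    rw [← integral_finset_sum]
    · have hz : ∀ᵐ x ∂(μ.restrict A),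
          ∑ i : Fin (d+1), ((lam i x).toNNReal : ℝ) • (v i - x) = 0 := by
        refine ae_restrict_of_ae ?_
        filter_upwards [hnn] with x hx
        have h5 : ∀ i : Fin (d+1), ((lam i x).toNNReal : ℝ) = lam i x :=
          fun i => Real.coe_toNNReal _ (hx i)
        calc ∑ i : Fin (d+1), ((lam i x).toNNReal : ℝ) • (v i - x)
            = ∑ i : Fin (d+1), lam i x • (v i - x) :=
              Finset.sum_congr rfl fun i _ => by rw [h5 i]
          _ = (∑ i : Fin (d+1), lam i x • v i) - (∑ i : Fin (d+1), lam i x) • x := by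
              simp_rw [smul_sub, Finset.sum_sub_distrib, ← Finset.sum_smul]
          _ = 0 := by
              rw [hlamdef, hvdef, lamS_sum R M x, lamS_comb R M (ne_of_gt hM0) x,
                one_smul, sub_self]
      calc ∫ x in A, ∑ i : Fin (d+1), ((lam i x).toNNReal : ℝ) • (v i - x) ∂μ
          = ∫ x in A, (0 : Ed d) ∂μ := integral_congr_ae (by filter_upwards [hz] with x hx using hx)
        _ = 0 := integral_zero _ _
    · intro i _
      have hconti : Continuous (fun x : Ed d => ((lam i x).toNNReal : ℝ) • (v i - x)) :=
        ((NNReal.continuous_coe.comp (continuous_real_toNNReal.comp (hlc i))).smul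
          (continuous_const.sub continuous_id))
      have hrK : (μ.restrict A) Kᶜ = 0 :=
        le_antisymm (le_trans (Measure.restrict_le_self _) hμK.le) zero_le
      exact integrable_of_null_compl hK hrK hconti
  exact ⟨ν, hνprob, hsupp, hcvx, π, hπprob, ⟨hfst, hsnd⟩, hmart⟩
end Simplex


lemma quantErrPow_nonneg (p : ℝ) (Γ : Finset E) (μ : Measure E) : 0 ≤ quantErrPow p Γ μ :=
  integral_nonneg fun _ => Real.rpow_nonneg Metric.infDist_nonneg p

lemma WpPow_nonneg (p : ℝ) (μ ν : Measure E) : 0 ≤ WpPow p μ ν := by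
  refine Real.sInf_nonneg ?_
  rintro c ⟨π, _, _, rfl⟩
  exact pCost_nonneg p π

lemma Wp_nonneg (p : ℝ) (μ ν : Measure E) : 0 ≤ Wp p μ ν :=
  Real.rpow_nonneg (WpPow_nonneg p μ ν) _


theorem stmt12 (d N : ℕ) (hN : d + 1 ≤ N) (p : ℝ) (hp : 1 ≤ p)
    (μ : Measure (Ed d)) [IsProbabilityMeasure μ]
    (hcomp : ∃ K : Set (Ed d), IsCompact K ∧ μ Kᶜ = 0) :
    sInf {c | ∃ Γ : Finset (Ed d), Γ.Nonempty ∧ Γ.card ≤ N ∧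
        c = quantErrPow p Γ μ ^ (1 / p)}
      = sInf {c | ∃ ν : Measure (Ed d), IsProbabilityMeasure ν ∧ SuppLE N ν ∧
          c = Wp p μ ν} ∧
    sInf {c | ∃ ν : Measure (Ed d), IsProbabilityMeasure ν ∧ SuppLE N ν ∧ c = Wp p μ ν}
      ≤ sInf {c | ∃ ν : Measure (Ed d), IsProbabilityMeasure ν ∧ SuppLE N ν ∧
          ConvexOrder μ ν ∧ c = Wp p μ ν} ∧
    sInf {c | ∃ ν : Measure (Ed d), IsProbabilityMeasure ν ∧ SuppLE N ν ∧
        ConvexOrder μ ν ∧ c = Wp p μ ν}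
      ≤ (sInf {c | ∃ ν : Measure (Ed d), IsProbabilityMeasure ν ∧ SuppLE N ν ∧
          ConvexOrder μ ν ∧
          ∃ π : Measure (Ed d × Ed d), IsMartingaleCoupling π μ ν ∧ c = pCost p π}) ^ (1 / p) := by
  classical
  obtain ⟨K, hK, hμK⟩ := hcomp
  have hp0 : (0:ℝ) < p := lt_of_lt_of_le one_pos hp
  have h1p : (0:ℝ) ≤ 1 / p := by positivity
  set A := {c | ∃ Γ : Finset (Ed d), Γ.Nonempty ∧ Γ.card ≤ N ∧
      c = quantErrPow p Γ μ ^ (1 / p)} with hAdef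
  set B := {c | ∃ ν : Measure (Ed d), IsProbabilityMeasure ν ∧ SuppLE N ν ∧
      c = Wp p μ ν} with hBdef
  set C := {c | ∃ ν : Measure (Ed d), IsProbabilityMeasure ν ∧ SuppLE N ν ∧
      ConvexOrder μ ν ∧ c = Wp p μ ν} with hCdef
  set D := {c | ∃ ν : Measure (Ed d), IsProbabilityMeasure ν ∧ SuppLE N ν ∧
      ConvexOrder μ ν ∧
      ∃ π : Measure (Ed d × Ed d), IsMartingaleCoupling π μ ν ∧ c = pCost p π} with hDdef
  have hAbdd : BddBelow A := by
    refine ⟨0, ?_⟩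
    rintro a ⟨Γ, _, _, rfl⟩
    exact Real.rpow_nonneg (quantErrPow_nonneg p Γ μ) _
  have hBbdd : BddBelow B := by
    refine ⟨0, ?_⟩
    rintro b ⟨ν, _, _, rfl⟩
    exact Wp_nonneg p μ ν
  have hCbdd : BddBelow C := by
    refine ⟨0, ?_⟩
    rintro b ⟨ν, _, _, _, rfl⟩
    exact Wp_nonneg p μ ν
  -- for each admissible grid, an admissible ν with `Wp ≤ quantErrPow ^ (1/p)`
  have hgrid : ∀ Γ : Finset (Ed d), Γ.Nonempty →
      ∃ ν : Measure (Ed d), IsProbabilityMeasure ν ∧ ν ((Γ : Set (Ed d))ᶜ) = 0 ∧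
        Wp p μ ν ≤ quantErrPow p Γ μ ^ (1 / p) := by
    intro Γ hΓ
    obtain ⟨f, hf, hfp⟩ := exists_nearestProj Γ hΓ
    obtain ⟨ν, hν1, hν2, π, hπ1, hπ2, hπ3⟩ := exists_coupling_of_quantizer (μ := μ) hp Γ hf hfp
    refine ⟨ν, hν1, hν2, ?_⟩
    have h1 : WpPow p μ ν ≤ quantErrPow p Γ μ := by
      rw [← hπ3]
      refine csInf_le ⟨0, ?_⟩ ⟨π, hπ1, hπ2, rfl⟩
      rintro c ⟨π', _, _, rfl⟩
      exact pCost_nonneg p π'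
    exact Real.rpow_le_rpow (WpPow_nonneg p μ ν) h1 h1p
  -- for each admissible ν, an admissible grid with `quantErrPow ^ (1/p) ≤ Wp`
  have hmeas : ∀ (ν : Measure (Ed d)) (s : Finset (Ed d)), IsProbabilityMeasure ν →
      ν ((s : Set (Ed d))ᶜ) = 0 →
      s.Nonempty ∧ quantErrPow p s μ ^ (1 / p) ≤ Wp p μ ν := by
    intro ν s hν hν0
    have hsne : s.Nonempty := by
      rcases s.eq_empty_or_nonempty with rfl | h
      · exfalso
        rw [Finset.coe_empty, compl_empty, measure_univ] at hν0
        exact one_ne_zero hν0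
      · exact h
    refine ⟨hsne, ?_⟩
    have h1 : quantErrPow p s μ ≤ WpPow p μ ν := by
      refine le_csInf ?_ ?_
      · refine ⟨pCost p (μ.prod ν), μ.prod ν, ?_, ⟨?_, ?_⟩, rfl⟩
        · infer_instance
        · rw [Measure.map_fst_prod, measure_univ, one_smul]
        · rw [Measure.map_snd_prod, measure_univ, one_smul]
      · rintro c ⟨π, hπ1, hπ2, rfl⟩
        exact quantErrPow_le_pCost hp hK hμK s hν0 hπ1 hπ2
    exact Real.rpow_le_rpow (quantErrPow_nonneg p s μ) h1 h1p
  have hone : (1:ℕ) ≤ N := le_trans (Nat.le_add_left 1 d) hN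
  have hΓ0 : ({0} : Finset (Ed d)).Nonempty := ⟨0, Finset.mem_singleton_self 0⟩
  have hΓ0card : ({0} : Finset (Ed d)).card ≤ N := by
    rw [Finset.card_singleton]; exact hone
  have hAne : A.Nonempty := ⟨_, {0}, hΓ0, hΓ0card, rfl⟩
  have hBne : B.Nonempty := by
    obtain ⟨ν, hν1, hν2, _⟩ := hgrid {0} hΓ0
    exact ⟨Wp p μ ν, ν, hν1, ⟨{0}, hΓ0card, hν2⟩, rfl⟩
  obtain ⟨ν₀, hν₀1, ⟨s₀, hs₀card, hs₀0⟩, hν₀cvx, π₀, hπ₀⟩ := exists_dominating d μ hK hμK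
  have hs₀N : (s₀ : Finset (Ed d)).card ≤ N := le_trans hs₀card hN
  have hCne : C.Nonempty := ⟨Wp p μ ν₀, ν₀, hν₀1, ⟨s₀, hs₀N, hs₀0⟩, hν₀cvx, rfl⟩
  have hDne : D.Nonempty :=
    ⟨pCost p π₀, ν₀, hν₀1, ⟨s₀, hs₀N, hs₀0⟩, hν₀cvx, π₀, hπ₀, rfl⟩
  refine ⟨le_antisymm ?_ ?_, ?_, ?_⟩
  · -- sInf A ≤ sInf B
    refine le_csInf hBne ?_
    rintro b ⟨ν, hν1, ⟨s, hscard, hs0⟩, rfl⟩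
    obtain ⟨hsne, hle⟩ := hmeas ν s hν1 hs0
    exact le_trans (csInf_le hAbdd ⟨s, hsne, hscard, rfl⟩) hle
  · -- sInf B ≤ sInf A
    refine le_csInf hAne ?_
    rintro a ⟨Γ, hΓne, hΓcard, rfl⟩
    obtain ⟨ν, hν1, hν2, hle⟩ := hgrid Γ hΓne
    exact le_trans (csInf_le hBbdd ⟨ν, hν1, ⟨Γ, hΓcard, hν2⟩, rfl⟩) hle
  · -- sInf B ≤ sInf C
    refine csInf_le_csInf hBbdd hCne ?_
    rintro c ⟨ν, h1, h2, _, rfl⟩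
    exact ⟨ν, h1, h2, rfl⟩
  · -- sInf C ≤ (sInf D) ^ (1/p)
    have hkey : ∀ c ∈ D, sInf C ≤ c ^ (1 / p) := by
      rintro c ⟨ν, h1, h2, h3, π, hmart, rfl⟩
      have hC : Wp p μ ν ∈ C := ⟨ν, h1, h2, h3, rfl⟩
      refine le_trans (csInf_le hCbdd hC) ?_
      have h4 : WpPow p μ ν ≤ pCost p π := by
        refine csInf_le ⟨0, ?_⟩ ⟨π, hmart.1, hmart.2.1, rfl⟩
        rintro c' ⟨π', _, _, rfl⟩
        exact pCost_nonneg p π'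
      exact Real.rpow_le_rpow (WpPow_nonneg p μ ν) h4 h1p
    have ht0 : 0 ≤ sInf C := by
      refine Real.sInf_nonneg ?_
      rintro c ⟨ν, _, _, _, rfl⟩
      exact Wp_nonneg p μ ν
    have h2 : sInf C ^ p ≤ sInf D := by
      refine le_csInf hDne ?_
      intro c hc
      have hc0 : (0:ℝ) ≤ c := by
        obtain ⟨ν, _, _, _, π, _, rfl⟩ := hc
        exact pCost_nonneg p π
      have h3 := Real.rpow_le_rpow ht0 (hkey c hc) (le_of_lt hp0)
      rwa [← Real.rpow_mul hc0, one_div_mul_cancel (ne_of_gt hp0),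
        Real.rpow_one] at h3
    calc sInf C = (sInf C ^ p) ^ (1 / p) := by
          rw [← Real.rpow_mul ht0, mul_one_div_cancel (ne_of_gt hp0), Real.rpow_one]
      _ ≤ sInf D ^ (1 / p) :=
          Real.rpow_le_rpow (Real.rpow_nonneg ht0 p) h2 h1p

end
end
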